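/- arXiv:2510.12013 — 3 statements merged into one kernel-verified Lean document; each statement's English description precedes it below -/
import Mathlib

section
/- Let q ≥ 2, s ≥ 2 an even integer, x, z ∈ R^d, and α > 0. Define f(u) = |x − u z|_s^q for u ∈ [0, α]. Then the second derivative satisfies sup_{u∈[0,α]} |f''(u)| ≤ q(|q−s| + (s−1)) (|x|_s + α|z|_s)^{q−2} |z|_s^2. -/
open Finset Real Filter Topology

set_option maxHeartbeats 1000000

private lemma deriv_zero_aux (u C r : ℝ) (hr : 0 < r) (φ : ℝ → ℝ) (hφu : φ u = 0)
    (hb : ∀ v, |φ v| ≤ C * |v - u| ^ (1 + r)) : HasDerivAt φ 0 u := by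
  rw [hasDerivAt_iff_isLittleO]
  simp only [hφu, sub_zero, smul_zero, sub_zero]
  rw [Asymptotics.isLittleO_iff]
  intro ε hε
  have t1 : Tendsto (fun v : ℝ => |v - u|) (𝓝 u) (𝓝 0) := by
    have : Continuous (fun v : ℝ => |v - u|) := (continuous_id.sub continuous_const).abs
    simpa using this.tendsto u
  have t2 : Tendsto (fun y : ℝ => C * y ^ r) (𝓝 0) (𝓝 0) := by
    have h2 : Tendsto (fun y : ℝ => y ^ r) (𝓝 0) (𝓝 ((0:ℝ) ^ r)) :=
      (Real.continuousAt_rpow_const 0 r (Or.inr hr.le)).tendsto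
    rw [Real.zero_rpow hr.ne'] at h2
    simpa using h2.const_mul C
  have t3 : Tendsto (fun v : ℝ => C * |v - u| ^ r) (𝓝 u) (𝓝 0) := t2.comp t1
  filter_upwards [t3.eventually_lt_const hε] with v hv
  have h1 : |φ v| ≤ (C * |v - u| ^ r) * |v - u| := by
    have h2 := hb v
    have h3 : |v - u| ^ (1 + r) = |v - u| * |v - u| ^ r := by
      rw [Real.rpow_add' (abs_nonneg _) (by positivity), Real.rpow_one]
    rw [h3] at h2
    calc |φ v| ≤ C * (|v - u| * |v - u| ^ r) := h2
      _ = (C * |v - u| ^ r) * |v - u| := by ring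
  calc ‖φ v‖ = |φ v| := rfl
    _ ≤ (C * |v - u| ^ r) * |v - u| := h1
    _ ≤ ε * |v - u| := mul_le_mul_of_nonneg_right hv.le (abs_nonneg _)
    _ = ε * ‖v - u‖ := rfl

private lemma holder_aux {d : ℕ} (s k : ℕ) (hk : 0 < k) (hks : k < s)
    (a b : Fin d → ℝ) (ha : ∀ i, 0 ≤ a i) (hb : ∀ i, 0 ≤ b i) :
    ∑ i, a i ^ (s - k) * b i ^ k ≤
      (∑ i, a i ^ s) ^ (((s:ℝ) - k) / s) * (∑ i, b i ^ s) ^ ((k:ℝ) / s) := by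
  have hs0 : (0:ℝ) < s := by exact_mod_cast hk.trans hks
  have hk0 : (0:ℝ) < k := by exact_mod_cast hk
  have hsk : (0:ℝ) < (s:ℝ) - k := by
    have : (k:ℝ) < s := by exact_mod_cast hks
    linarith
  have hpq : Real.HolderConjugate ((s:ℝ)/((s:ℝ)-k)) ((s:ℝ)/k) := by
    constructor
    · field_simp; ring
    · positivity
    · positivity
  have H := Real.inner_le_Lp_mul_Lq_of_nonneg (s := (univ : Finset (Fin d)))
      (f := fun i => a i ^ (s - k)) (g := fun i => b i ^ k) hpq
      (fun i _ => pow_nonneg (ha i) _) (fun i _ => pow_nonneg (hb i) _)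
  have e1 : ∀ i : Fin d, ((a i ^ (s - k) : ℝ)) ^ ((s:ℝ)/((s:ℝ)-k)) = a i ^ s := fun i => by
    rw [← Real.rpow_natCast (a i) (s - k), ← Real.rpow_mul (ha i), Nat.cast_sub hks.le,
      show ((s:ℝ) - k) * ((s:ℝ)/((s:ℝ)-k)) = (s:ℝ) by field_simp, Real.rpow_natCast]
  have e2 : ∀ i : Fin d, ((b i ^ k : ℝ)) ^ ((s:ℝ)/(k:ℝ)) = b i ^ s := fun i => by
    rw [← Real.rpow_natCast (b i) k, ← Real.rpow_mul (hb i),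
      show (k:ℝ) * ((s:ℝ)/(k:ℝ)) = (s:ℝ) by field_simp, Real.rpow_natCast]
  simp only [e1, e2] at H
  rw [one_div_div, one_div_div] at H
  exact H

private lemma my_hasDerivAt_abs_rpow (u q : ℝ) (hq : 2 ≤ q) (v : ℝ) :
    HasDerivAt (fun w : ℝ => |w - u| ^ q) (q * (v - u) * |v - u| ^ (q - 2)) v := by
  rcases eq_or_ne v u with rfl | hvu
  · have h := deriv_zero_aux v 1 (q - 1) (by linarith) (fun w => |w - v| ^ q)
      (by simp [Real.zero_rpow (by positivity : q ≠ 0)])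
      (fun w => by
        rw [show 1 + (q - 1) = q by ring, one_mul,
          abs_of_nonneg (Real.rpow_nonneg (abs_nonneg _) _)])
    simpa using h
  · have h0 : v - u ≠ 0 := sub_ne_zero.2 hvu
    have h1 : HasDerivAt (fun w : ℝ => |w - u|) ((SignType.sign (v - u) : ℝ) * 1) v :=
      by have h := (hasDerivAt_abs h0).comp v ((hasDerivAt_id v).sub_const u); exact h
    have h2 := h1.rpow_const (p := q) (Or.inl (abs_ne_zero.2 h0))
    convert h2 using 1
    rw [show q - 1 = (q - 2) + 1 by ring, Real.rpow_add (abs_pos.2 h0), Real.rpow_one, mul_one]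
    have hsg : (SignType.sign (v - u) : ℝ) * |v - u| = v - u := sign_mul_abs (v - u)
    linear_combination (-(q * |v - u| ^ (q - 2))) * hsg

theorem stmt3 (d s : ℕ) (hs : 2 ≤ s) (hse : Even s) (q : ℝ) (hq : 2 ≤ q)
    (x z : Fin d → ℝ) (α : ℝ) (hα : 0 < α) :
    ∀ u ∈ Set.Icc (0 : ℝ) α,
      |deriv (deriv (fun u : ℝ => (∑ i, (x i - u * z i) ^ s) ^ (q / (s : ℝ)))) u|
        ≤ q * (|q - (s : ℝ)| + ((s : ℝ) - 1)) *
            ((∑ i, |x i| ^ s) ^ (1 / (s : ℝ)) + α * (∑ i, |z i| ^ s) ^ (1 / (s : ℝ))) ^ (q - 2) *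
            ((∑ i, |z i| ^ s) ^ (1 / (s : ℝ))) ^ 2 := by
  intro u hu
  obtain ⟨hu0, huα⟩ := hu
  have h2s : (2:ℝ) ≤ (s:ℝ) := by exact_mod_cast hs
  have hs0 : (0:ℝ) < s := by linarith
  have hsne : (s:ℝ) ≠ 0 := hs0.ne'
  have hq0 : (0:ℝ) < q := by linarith
  set B : ℝ := (∑ i, |z i| ^ s) ^ (1 / (s : ℝ)) with hBdef
  set X : ℝ := (∑ i, |x i| ^ s) ^ (1 / (s : ℝ)) with hXdef
  set f : ℝ → ℝ := fun v : ℝ => (∑ i, (x i - v * z i) ^ s) ^ (q / (s : ℝ)) with hfdef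
  set Zs : ℝ := ∑ i, |z i| ^ s with hZsdef
  set M : ℝ → ℝ := fun v => ∑ i, (x i - v * z i) ^ s with hMdef
  have hZs0 : 0 ≤ Zs := sum_nonneg fun i _ => by positivity
  have hB0 : 0 ≤ B := Real.rpow_nonneg hZs0 _
  have hX0 : 0 ≤ X := Real.rpow_nonneg (sum_nonneg fun i _ => by positivity) _
  have hRHSnn : 0 ≤ q * (|q - (s:ℝ)| + ((s:ℝ) - 1)) * (X + α * B) ^ (q - 2) * B ^ 2 := by
    apply mul_nonneg (mul_nonneg (mul_nonneg hq0.le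
      (add_nonneg (abs_nonneg _) (by linarith)))
      (Real.rpow_nonneg (by positivity) _)) (sq_nonneg B)
  have hMnn : ∀ v, 0 ≤ M v := fun v => sum_nonneg fun i _ => hse.pow_nonneg _
  -- derivatives of M
  have h1 : ∀ (i : Fin d) (v : ℝ), HasDerivAt (fun w => (x i - w * z i) ^ s)
      ((s:ℝ) * (x i - v * z i) ^ (s - 1) * -(1 * z i)) v := fun i v =>
    (((hasDerivAt_id v).mul_const (z i)).const_sub (x i)).pow s
  have h1' : ∀ (i : Fin d) (v : ℝ), HasDerivAt (fun w => (x i - w * z i) ^ (s - 1))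
      ((↑(s-1) : ℝ) * (x i - v * z i) ^ (s - 1 - 1) * -(1 * z i)) v := fun i v =>
    (((hasDerivAt_id v).mul_const (z i)).const_sub (x i)).pow (s - 1)
  set G : ℝ → ℝ := fun v => ∑ i, (s:ℝ) * (x i - v * z i) ^ (s - 1) * -(1 * z i) with hGdef
  set HH : ℝ → ℝ := fun v =>
    ∑ i, (s:ℝ) * ((↑(s-1) : ℝ) * (x i - v * z i) ^ (s - 1 - 1) * -(1 * z i)) * -(1 * z i)
    with hHHdef
  have hG : ∀ v, HasDerivAt M (G v) v := fun v =>
    HasDerivAt.fun_sum fun i _ => h1 i v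
  have hH : ∀ v, HasDerivAt G (HH v) v := fun v =>
    HasDerivAt.fun_sum fun i _ => ((h1' i v).const_mul (s:ℝ)).mul_const (-(1 * z i))
  have hGu : ∀ v, G v = -((s:ℝ) * ∑ i, (x i - v * z i) ^ (s - 1) * z i) := by
    intro v
    rw [hGdef, Finset.mul_sum, ← Finset.sum_neg_distrib]
    exact Finset.sum_congr rfl fun i _ => by ring
  have hHHu : ∀ v, HH v = ((s:ℝ) * ((s:ℝ) - 1)) * ∑ i, (x i - v * z i) ^ (s - 2) * z i ^ 2 := by
    intro v
    rw [hHHdef, Finset.mul_sum]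
    refine Finset.sum_congr rfl fun i _ => ?_
    rw [show s - 1 - 1 = s - 2 from by omega, Nat.cast_sub (by omega : 1 ≤ s)]
    push_cast
    ring
  -- pointwise facts at u
  have hMabs : M u = ∑ i, |x i - u * z i| ^ s :=
    Finset.sum_congr rfl fun i _ => (hse.pow_abs _).symm
  have hGbound : |∑ i, (x i - u * z i) ^ (s - 1) * z i| ≤ M u ^ (((s:ℝ) - 1)/(s:ℝ)) * B := by
    have e0 : ((1:ℕ):ℝ) = (1:ℝ) := by norm_num
    calc |∑ i, (x i - u * z i) ^ (s - 1) * z i| ≤ ∑ i, |(x i - u * z i) ^ (s - 1) * z i| :=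
          Finset.abs_sum_le_sum_abs _ _
      _ = ∑ i, |x i - u * z i| ^ (s - 1) * |z i| ^ 1 := by
          refine Finset.sum_congr rfl fun i _ => ?_
          rw [abs_mul, abs_pow, pow_one]
      _ ≤ (∑ i, |x i - u * z i| ^ s) ^ (((s:ℝ) - 1)/(s:ℝ)) * (∑ i, |z i| ^ s) ^ (((1:ℕ):ℝ)/(s:ℝ)) := by
          exact_mod_cast holder_aux s 1 one_pos (by omega) _ _
            (fun i => abs_nonneg _) (fun i => abs_nonneg _)
      _ = M u ^ (((s:ℝ) - 1)/(s:ℝ)) * B := by rw [← hMabs, hBdef, e0]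
  have hB2 : B ^ 2 = Zs ^ ((2:ℝ)/(s:ℝ)) := by
    rw [hBdef, ← Real.rpow_natCast ((Zs) ^ (1 / (s:ℝ))) 2, ← Real.rpow_mul hZs0]
    congr 1
    push_cast
    ring
  have hHbound : ∑ i, (x i - u * z i) ^ (s - 2) * z i ^ 2
      ≤ M u ^ (((s:ℝ) - 2)/(s:ℝ)) * B ^ 2 := by
    rcases eq_or_lt_of_le hs with hs2 | hs2
    · -- s = 2
      have hs2' : s = 2 := hs2.symm
      subst hs2'
      have : ∑ i, (x i - u * z i) ^ (2 - 2) * z i ^ 2 = Zs := by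
        rw [hZsdef]
        refine Finset.sum_congr rfl fun i _ => ?_
        simp [sq_abs]
      rw [this, hB2]
      have : ((2:ℝ) - 2)/(2:ℝ) = 0 := by norm_num
      push_cast
      rw [this, Real.rpow_zero, one_mul]
      rw [show (2:ℝ)/(2:ℝ) = 1 by norm_num, Real.rpow_one]
    · -- 2 < s
      have hev : Even (s - 2) := (Nat.even_sub hs).2 (by simp [hse])
      have : ∑ i, (x i - u * z i) ^ (s - 2) * z i ^ 2
          = ∑ i, |x i - u * z i| ^ (s - 2) * |z i| ^ 2 := by
        refine Finset.sum_congr rfl fun i _ => ?_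
        rw [hev.pow_abs, sq_abs]
      rw [this, hB2]
      have e2 : ((2:ℕ):ℝ) = (2:ℝ) := by norm_num
      have := holder_aux s 2 two_pos hs2 (fun i => |x i - u * z i|) (fun i => |z i|)
        (fun i => abs_nonneg _) (fun i => abs_nonneg _)
      rw [e2] at this
      rw [← hMabs] at this
      rw [hZsdef]
      exact this
  have hMink : M u ^ (1/(s:ℝ)) ≤ X + α * B := by
    have hmk := Real.Lp_add_le (s := (univ : Finset (Fin d))) (f := x)
      (g := fun i => -(u * z i)) (p := (s:ℝ)) (by linarith)
    simp only [← sub_eq_add_neg] at hmk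
    have e1 : ∀ a : ℝ, |a| ^ (s:ℝ) = |a| ^ s := fun a => Real.rpow_natCast _ _
    simp only [e1] at hmk
    have e2 : (∑ i, |-(u * z i)| ^ s) = u ^ s * Zs := by
      rw [hZsdef, Finset.mul_sum]
      refine Finset.sum_congr rfl fun i _ => ?_
      rw [abs_neg, abs_mul, abs_of_nonneg hu0, mul_pow]
    rw [e2] at hmk
    have e3 : (u ^ s * Zs) ^ (1/(s:ℝ)) = u * B := by
      rw [Real.mul_rpow (by positivity) hZs0, hBdef, ← Real.rpow_natCast u s,
        ← Real.rpow_mul hu0, mul_one_div, div_self hsne, Real.rpow_one]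
    rw [e3] at hmk
    calc M u ^ (1/(s:ℝ)) = (∑ i, |x i - u * z i| ^ s) ^ (1/(s:ℝ)) := by rw [hMabs]
      _ ≤ X + u * B := hmk
      _ ≤ X + α * B := by nlinarith
  -- case split on M u = 0
  rcases eq_or_lt_of_le (hMnn u) with hN | hN
  · -- degenerate case : M u = 0
    have hx : ∀ i, x i = u * z i := by
      intro i
      have h0 := (Finset.sum_eq_zero_iff_of_nonneg
        (fun j _ => hse.pow_nonneg (x j - u * z j))).1 hN.symm i (mem_univ i)
      have := pow_eq_zero_iff (by omega : s ≠ 0) |>.1 h0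
      linarith [this]
    have hMv : ∀ v, M v = (u - v) ^ s * Zs := by
      intro v
      have hterm : ∀ i : Fin d, (x i - v * z i) ^ s = (u - v) ^ s * z i ^ s := fun i => by
        rw [hx i, show u * z i - v * z i = (u - v) * z i by ring, mul_pow]
      rw [hMdef]
      simp only []
      rw [Finset.sum_congr rfl fun i _ => hterm i, ← Finset.mul_sum, hZsdef]
      congr 1
      exact Finset.sum_congr rfl fun i _ => (hse.pow_abs _).symm
    rcases eq_or_lt_of_le hZs0 with hZ0 | hZpos
    · -- z = 0 case
      have hf0 : f = fun _ => (0:ℝ) := funext fun v => by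
        have h1 : f v = M v ^ (q/(s:ℝ)) := rfl
        rw [h1, hMv, ← hZ0, mul_zero, Real.zero_rpow (by positivity)]
      rw [hf0]
      simp only [deriv_const']
      simpa using hRHSnn
    · -- z ≠ 0
      set c : ℝ := Zs ^ (q/(s:ℝ)) with hc
      have hc0 : 0 < c := Real.rpow_pos_of_pos hZpos _
      have hfc : f = fun v => c * |v - u| ^ q := funext fun v => by
        have h1 : f v = ((u - v) ^ s * Zs) ^ (q/(s:ℝ)) := by
          rw [show f v = M v ^ (q/(s:ℝ)) from rfl, hMv]
        rw [h1]
        have h2 : (u - v) ^ s = |v - u| ^ (s:ℝ) := by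
          rw [Real.rpow_natCast, abs_sub_comm, hse.pow_abs]
        rw [h2, Real.mul_rpow (Real.rpow_nonneg (abs_nonneg _) _) hZs0,
          ← Real.rpow_mul (abs_nonneg _), show (s:ℝ) * (q/(s:ℝ)) = q by field_simp]
        ring
      have hd1 : ∀ v, HasDerivAt f (c * (q * (v - u) * |v - u| ^ (q - 2))) v := fun v => by
        rw [hfc]
        exact (my_hasDerivAt_abs_rpow u q hq v).const_mul c
      have hdf : deriv f = fun v => c * (q * (v - u) * |v - u| ^ (q - 2)) :=
        funext fun v => (hd1 v).deriv
      rw [hdf]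
      rcases eq_or_lt_of_le hq with hq2 | hq2
      · -- q = 2
        have hfun : (fun v => c * (q * (v - u) * |v - u| ^ (q - 2)))
            = fun v => (c * q) * (v - u) := by
          funext v
          rw [← hq2, show (2:ℝ) - 2 = 0 by norm_num, Real.rpow_zero]
          ring
        rw [hfun]
        have hder : deriv (fun v => (c * q) * (v - u)) u = c * q := by
          have h := (((hasDerivAt_id u).sub_const u).const_mul (c * q)).deriv
          simpa using h
        rw [hder]
        have hcB : c = B ^ 2 := by
          rw [hc, ← hq2, hB2]
        rw [hcB, abs_of_nonneg (by positivity), ← hq2,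
          show (2:ℝ) - 2 = 0 by norm_num, Real.rpow_zero]
        have h9 : (1:ℝ) ≤ |2 - (s:ℝ)| + ((s:ℝ) - 1) := by
          rw [abs_of_nonpos (by linarith)]; linarith
        nlinarith [h9, sq_nonneg B]
      · -- q > 2
        have hb : ∀ v, |c * (q * (v - u) * |v - u| ^ (q - 2))|
            ≤ (c * q) * |v - u| ^ (1 + (q - 2)) := by
          intro v
          rw [Real.rpow_add' (abs_nonneg _) (by intro h; nlinarith), Real.rpow_one]
          rw [abs_mul, abs_mul, abs_mul, abs_of_pos hc0, abs_of_pos hq0,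
            abs_of_nonneg (Real.rpow_nonneg (abs_nonneg _) _)]
          exact le_of_eq (by ring)
        have hd0 : HasDerivAt (fun v => c * (q * (v - u) * |v - u| ^ (q - 2))) 0 u :=
          deriv_zero_aux u (c * q) (q - 2) (by linarith) _ (by simp) hb
        rw [hd0.deriv]
        simpa using hRHSnn
  · -- main case : 0 < M u
    set P : ℝ := q / (s:ℝ) with hP
    have hP0 : 0 < P := div_pos hq0 hs0
    have hf' : ∀ v, 0 < M v → HasDerivAt f (G v * P * M v ^ (P - 1)) v := fun v hv =>
      (hG v).rpow_const (Or.inl hv.ne')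
    have hEv : ∀ᶠ v in 𝓝 u, 0 < M v :=
      (hG u).continuousAt.eventually (eventually_gt_nhds hN)
    have hdf : deriv f =ᶠ[𝓝 u] (fun v => G v * P * M v ^ (P - 1)) :=
      hEv.mono fun v hv => (hf' v hv).deriv
    have h2 : HasDerivAt (fun v => M v ^ (P - 1)) (G u * (P - 1) * M u ^ (P - 1 - 1)) u :=
      (hG u).rpow_const (Or.inl hN.ne')
    have hD2 : HasDerivAt (fun v => G v * P * M v ^ (P - 1))
        (HH u * P * M u ^ (P - 1) + G u * P * (G u * (P - 1) * M u ^ (P - 1 - 1))) u :=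
      ((hH u).mul_const P).mul h2
    have hkey : deriv (deriv f) u
        = HH u * P * M u ^ (P - 1) + G u * P * (G u * (P - 1) * M u ^ (P - 1 - 1)) := by
      rw [hdf.deriv_eq]
      exact hD2.deriv
    rw [hkey, show HH u * P * M u ^ (P - 1) + G u * P * (G u * (P - 1) * M u ^ (P - 1 - 1))
        = P * ((P - 1) * M u ^ (P - 1 - 1) * G u) * G u + P * M u ^ (P - 1) * HH u from by ring]
    set N : ℝ := M u with hNdef
    have hNp : 0 < N := hN
    have hGuB : |G u| ≤ (s:ℝ) * (N ^ (((s:ℝ) - 1)/(s:ℝ)) * B) := by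
      rw [hGu u, abs_neg, abs_mul, abs_of_nonneg (by positivity : (0:ℝ) ≤ (s:ℝ))]
      exact mul_le_mul_of_nonneg_left hGbound (by positivity)
    have hHHnn : 0 ≤ ∑ i, (x i - u * z i) ^ (s - 2) * z i ^ 2 := by
      have hev : Even (s - 2) := (Nat.even_sub hs).2 (by simp [hse])
      exact sum_nonneg fun i _ => mul_nonneg (hev.pow_nonneg _) (sq_nonneg _)
    have hHuB : |HH u| ≤ (s:ℝ) * ((s:ℝ) - 1) * (N ^ (((s:ℝ) - 2)/(s:ℝ)) * B ^ 2) := by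
      rw [hHHu u, abs_mul, abs_of_nonneg (by nlinarith : (0:ℝ) ≤ (s:ℝ) * ((s:ℝ) - 1)),
        abs_of_nonneg hHHnn]
      exact mul_le_mul_of_nonneg_left hHbound (by nlinarith)
    have e1 : |P * ((P - 1) * N ^ (P - 1 - 1) * G u) * G u|
        = P * (|P - 1| * N ^ (P - 1 - 1) * |G u|) * |G u| := by
      simp [abs_mul, abs_of_pos hP0, abs_of_nonneg (Real.rpow_nonneg hNp.le (P - 1 - 1))]
    have e2 : |P * N ^ (P - 1) * HH u| = P * N ^ (P - 1) * |HH u| := by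
      simp [abs_mul, abs_of_pos hP0, abs_of_nonneg (Real.rpow_nonneg hNp.le (P - 1))]
    have hsgn : (s:ℝ) * |P - 1| = |q - (s:ℝ)| := by
      have h4 : q - (s:ℝ) = (s:ℝ) * (P - 1) := by rw [hP]; field_simp
      rw [h4, abs_mul, abs_of_pos hs0]
    calc |P * ((P - 1) * N ^ (P - 1 - 1) * G u) * G u + P * N ^ (P - 1) * HH u|
        ≤ |P * ((P - 1) * N ^ (P - 1 - 1) * G u) * G u| + |P * N ^ (P - 1) * HH u| :=
          abs_add_le _ _
      _ = P * (|P - 1| * N ^ (P - 1 - 1) * |G u|) * |G u| + P * N ^ (P - 1) * |HH u| := by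
          rw [e1, e2]
      _ ≤ P * (|P - 1| * N ^ (P - 1 - 1) * ((s:ℝ) * (N ^ (((s:ℝ) - 1)/(s:ℝ)) * B)))
              * ((s:ℝ) * (N ^ (((s:ℝ) - 1)/(s:ℝ)) * B))
            + P * N ^ (P - 1) * ((s:ℝ) * ((s:ℝ) - 1) * (N ^ (((s:ℝ) - 2)/(s:ℝ)) * B ^ 2)) := by
          have hg0 : (0:ℝ) ≤ |G u| := abs_nonneg _
          have hr1 : (0:ℝ) ≤ N ^ (P - 1 - 1) := Real.rpow_nonneg hNp.le _
          have hr2 : (0:ℝ) ≤ N ^ (P - 1) := Real.rpow_nonneg hNp.le _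
          have hr3 : (0:ℝ) ≤ (s:ℝ) * (N ^ (((s:ℝ) - 1)/(s:ℝ)) * B) := by
            have := Real.rpow_nonneg hNp.le (((s:ℝ) - 1)/(s:ℝ))
            positivity
          refine add_le_add (mul_le_mul (mul_le_mul_of_nonneg_left
              (mul_le_mul_of_nonneg_left hGuB (mul_nonneg (abs_nonneg _) hr1)) hP0.le)
              hGuB hg0 (mul_nonneg hP0.le (mul_nonneg (mul_nonneg (abs_nonneg _) hr1) hr3)))
            (mul_le_mul_of_nonneg_left hHuB (mul_nonneg hP0.le hr2))
      _ = (P * |P - 1| * ((s:ℝ) * (s:ℝ)))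
              * (N ^ (P - 1 - 1) * N ^ (((s:ℝ) - 1)/(s:ℝ)) * N ^ (((s:ℝ) - 1)/(s:ℝ))) * B ^ 2
            + (P * ((s:ℝ) * ((s:ℝ) - 1))) * (N ^ (P - 1) * N ^ (((s:ℝ) - 2)/(s:ℝ))) * B ^ 2 := by
          ring
      _ = q * |q - (s:ℝ)| * N ^ ((q - 2)/(s:ℝ)) * B ^ 2
            + q * ((s:ℝ) - 1) * N ^ ((q - 2)/(s:ℝ)) * B ^ 2 := by
          rw [← Real.rpow_add hNp, ← Real.rpow_add hNp, ← Real.rpow_add hNp]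
          rw [show P - 1 - 1 + ((s:ℝ) - 1)/(s:ℝ) + ((s:ℝ) - 1)/(s:ℝ) = (q - 2)/(s:ℝ) from by
              rw [hP]; field_simp; try ring,
            show P - 1 + ((s:ℝ) - 2)/(s:ℝ) = (q - 2)/(s:ℝ) from by rw [hP]; field_simp; try ring]
          have h5 : P * |P - 1| * ((s:ℝ) * (s:ℝ)) = q * |q - (s:ℝ)| := by
            rw [← hsgn, hP]
            field_simp
            try ring
          have h6 : P * ((s:ℝ) * ((s:ℝ) - 1)) = q * ((s:ℝ) - 1) := by
            rw [hP]; field_simp; try ring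
          rw [h5, h6]
      _ = q * (|q - (s:ℝ)| + ((s:ℝ) - 1)) * N ^ ((q - 2)/(s:ℝ)) * B ^ 2 := by ring
      _ ≤ q * (|q - (s:ℝ)| + ((s:ℝ) - 1)) * (X + α * B) ^ (q - 2) * B ^ 2 := by
          have h7 : N ^ ((q - 2)/(s:ℝ)) ≤ (X + α * B) ^ (q - 2) := by
            rw [show (q - 2)/(s:ℝ) = (1/(s:ℝ)) * (q - 2) by ring, Real.rpow_mul hNp.le]
            exact Real.rpow_le_rpow (Real.rpow_nonneg hNp.le _) hMink (by linarith)
          have h8 : (0:ℝ) ≤ q * (|q - (s:ℝ)| + ((s:ℝ) - 1)) :=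
            mul_nonneg hq0.le (add_nonneg (abs_nonneg _) (by linarith))
          exact mul_le_mul_of_nonneg_right (mul_le_mul_of_nonneg_left h7 h8) (sq_nonneg B)
end

section
/- Let q ≥ 2, s ≥ 2 an even integer, x, z ∈ R^d, and α > 0. Then | |x − αz|_s^q − |x|_s^q + qα |x|_s^{q−s} ⟨x^{⊙(s−1)}, z⟩ | ≤ (qα²/2)(|q−s| + (s−1)) (|x|_s + α|z|_s)^{q−2} |z|_s^2, where x^{⊙(s−1)} is the entrywise (s−1)-th power of x. -/
open Finset Real

/-- The `ℓ^s` norm for a natural exponent `s`. -/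
noncomputable def lnorm (s : ℕ) {d : ℕ} (x : Fin d → ℝ) : ℝ :=
  (∑ i, |x i| ^ s) ^ (1 / (s : ℝ))

section Aux

lemma lnorm_nonneg (s : ℕ) {d : ℕ} (y : Fin d → ℝ) : 0 ≤ lnorm s y :=
  Real.rpow_nonneg (Finset.sum_nonneg fun i _ => pow_nonneg (abs_nonneg _) _) _

lemma lnorm_add_le {d : ℕ} (s : ℕ) (hs : 1 ≤ s) (u v : Fin d → ℝ) :
    lnorm s (u + v) ≤ lnorm s u + lnorm s v := by
  have h := Real.Lp_add_le Finset.univ u v (p := (s : ℝ))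
    (by exact_mod_cast (Nat.one_le_cast.2 hs))
  simpa [lnorm, Real.rpow_natCast] using h

lemma lnorm_smul {d : ℕ} (s : ℕ) (hs : 1 ≤ s) (c : ℝ) (z : Fin d → ℝ) :
    lnorm s (c • z) = |c| * lnorm s z := by
  have hS : (s : ℝ) ≠ 0 := by positivity
  have : ∀ i, |c * z i| ^ s = |c| ^ s * |z i| ^ s := by
    intro i; rw [abs_mul, mul_pow]
  simp only [lnorm, Pi.smul_apply, smul_eq_mul, this, ← Finset.mul_sum]
  rw [Real.mul_rpow (by positivity) (Finset.sum_nonneg fun i _ => by positivity),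
    ← Real.rpow_natCast |c| s, ← Real.rpow_mul (abs_nonneg c), mul_one_div,
    div_self hS, Real.rpow_one]

/-- Taylor-type integral bound. -/
lemma taylor2 {f f' : ℝ → ℝ} {c K : ℝ} (hc : 0 ≤ c)
    (hderiv : ∀ t ∈ Set.Icc (0:ℝ) c, HasDerivAt f (f' t) t)
    (hcont : ContinuousOn f' (Set.Icc 0 c))
    (hlip : ∀ t ∈ Set.Icc (0:ℝ) c, |f' t - f' 0| ≤ K * t) :
    |f c - f 0 - c * f' 0| ≤ K * c ^ 2 / 2 := by
  rcases eq_or_lt_of_le hc with rfl | hc0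
  · simp
  have hK : 0 ≤ K := by
    have h := hlip c ⟨hc, le_refl c⟩
    nlinarith [abs_nonneg (f' c - f' 0)]
  have huIcc : Set.uIcc (0:ℝ) c = Set.Icc 0 c := Set.uIcc_of_le hc
  have hderiv' : ∀ t ∈ Set.uIcc (0:ℝ) c, HasDerivAt f (f' t) t := by
    rw [huIcc]; exact hderiv
  have hint : IntervalIntegrable f' MeasureTheory.volume 0 c := by
    apply ContinuousOn.intervalIntegrable; rwa [huIcc]
  have hftc : ∫ t in (0:ℝ)..c, f' t = f c - f 0 :=
    intervalIntegral.integral_eq_sub_of_hasDerivAt hderiv' hint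
  have hsub : f c - f 0 - c * f' 0 = ∫ t in (0:ℝ)..c, (f' t - f' 0) := by
    rw [intervalIntegral.integral_sub hint intervalIntegrable_const, hftc,
      intervalIntegral.integral_const]
    simp [smul_eq_mul]
  rw [hsub, ← Real.norm_eq_abs]
  have hKt : IntervalIntegrable (fun t => K * t) MeasureTheory.volume 0 c :=
    (continuous_const.mul continuous_id).intervalIntegrable 0 c
  have hae : ∀ᵐ t ∂MeasureTheory.volume.restrict (Set.uIoc (0:ℝ) c),
      ‖f' t - f' 0‖ ≤ K * t := by
    refine MeasureTheory.ae_restrict_of_forall_mem measurableSet_uIoc ?_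
    intro t ht
    rw [Set.uIoc_of_le hc] at ht
    exact (Real.norm_eq_abs _) ▸ hlip t ⟨le_of_lt ht.1, ht.2⟩
  refine (intervalIntegral.norm_integral_le_abs_of_norm_le hae hKt).trans ?_
  rw [intervalIntegral.integral_const_mul, integral_id]
  rw [abs_of_nonneg (by nlinarith [sq_nonneg c])]
  ring_nf
  nlinarith [sq_nonneg c]

lemma two_cast_real : ((2:ℕ):ℝ) = 2 := by norm_num

/-- rewrite `(t^2)^(p/2)` as `|t|^p`. -/
lemma sq_rpow_half {p : ℝ} (t : ℝ) : (t ^ 2) ^ (p / 2) = |t| ^ p := by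
  rw [← sq_abs, ← Real.rpow_natCast |t| 2, ← Real.rpow_mul (abs_nonneg t),
    show ((2:ℕ):ℝ) * (p / 2) = p by push_cast; ring]

/-- derivative of `|t|^q`. -/
lemma hasDerivAt_abs_rpow' {q : ℝ} (hq : 2 ≤ q) (t : ℝ) :
    HasDerivAt (fun u : ℝ => |u| ^ q) (q * ((|t|) ^ (q - 2) * t)) t := by
  have h0 : HasDerivAt (fun u : ℝ => u ^ 2) (2 * t) t := by
    simpa using hasDerivAt_pow 2 t
  have h1 : HasDerivAt (fun u : ℝ => (u ^ 2) ^ (q / 2))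
      (2 * t * (q / 2) * (t ^ 2) ^ (q / 2 - 1)) t :=
    h0.rpow_const (p := q / 2) (Or.inr (by linarith))
  have hfun : (fun u : ℝ => (u ^ 2) ^ (q / 2)) = fun u : ℝ => |u| ^ q := by
    funext u
    rw [sq_rpow_half]
  have hval : 2 * t * (q / 2) * (t ^ 2) ^ (q / 2 - 1) = q * ((|t|) ^ (q - 2) * t) := by
    rw [show q / 2 - 1 = (q - 2) / 2 by ring, sq_rpow_half]
    ring
  rw [hfun, hval] at h1
  exact h1

lemma continuous_psi {q : ℝ} (hq : 2 ≤ q) :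
    Continuous (fun u : ℝ => |u| ^ (q - 2) * u) := by
  have hfun : (fun u : ℝ => |u| ^ (q - 2) * u)
      = fun u : ℝ => (u ^ 2) ^ ((q - 2) / 2) * u := by
    funext u; rw [sq_rpow_half]
  rw [hfun]
  exact ((continuous_pow 2).rpow_const (fun u => Or.inr (by linarith))).mul continuous_id

/-- Lipschitz bound for `ψ(t) = |t|^(q-2) t` on `[-R, R]`. -/
lemma psi_lipschitz {q : ℝ} (hq : 2 ≤ q) {R a b : ℝ} (ha : |a| ≤ R) (hb : |b| ≤ R) :
    |(|b|) ^ (q - 2) * b - (|a|) ^ (q - 2) * a| ≤ (q - 1) * R ^ (q - 2) * |b - a| := by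
  have hR : 0 ≤ R := (abs_nonneg a).trans ha
  set ψ : ℝ → ℝ := fun t => (|t|) ^ (q - 2) * t with hψ
  have hpsi_eq : ∀ t : ℝ, 0 ≤ t → ψ t = t ^ (q - 1) := by
    intro t ht
    rcases eq_or_lt_of_le ht with rfl | h
    · simp [hψ, Real.zero_rpow (show q - 1 ≠ 0 by intro h; rw [sub_eq_zero] at h; linarith)]
    · simp only [hψ, abs_of_pos h]
      rw [← Real.rpow_add_one (ne_of_gt h), show q - 2 + 1 = q - 1 by ring]
  -- Lipschitz on [0, R] via MVT
  have P : ∀ a' ∈ Set.Icc (0:ℝ) R, ∀ b' ∈ Set.Icc (0:ℝ) R,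
      |ψ b' - ψ a'| ≤ (q - 1) * R ^ (q - 2) * |b' - a'| := by
    intro a' ha' b' hb'
    have hd : ∀ t ∈ Set.Icc (0:ℝ) R,
        HasDerivWithinAt (fun u : ℝ => u ^ (q - 1)) ((q - 1) * t ^ (q - 1 - 1))
          (Set.Icc 0 R) t := fun t _ =>
      (Real.hasDerivAt_rpow_const (Or.inr (by linarith))).hasDerivWithinAt
    have hbound : ∀ t ∈ Set.Icc (0:ℝ) R,
        ‖(q - 1) * t ^ (q - 1 - 1)‖ ≤ (q - 1) * R ^ (q - 2) := by
      intro t ht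
      rw [Real.norm_eq_abs, show q - 1 - 1 = q - 2 by ring,
        abs_of_nonneg (mul_nonneg (by linarith) (Real.rpow_nonneg ht.1 _))]
      exact mul_le_mul_of_nonneg_left
        (Real.rpow_le_rpow ht.1 ht.2 (by linarith)) (by linarith)
    have key := (convex_Icc (0:ℝ) R).norm_image_sub_le_of_norm_hasDerivWithin_le
      hd hbound ha' hb'
    rw [Real.norm_eq_abs, Real.norm_eq_abs] at key
    rw [hpsi_eq a' ha'.1, hpsi_eq b' hb'.1]
    exact key
  have hodd : ∀ t : ℝ, ψ (-t) = -ψ t := by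
    intro t; simp only [hψ, abs_neg]; ring
  have Q : ∀ t : ℝ, |t| ≤ R → |ψ t| ≤ (q - 1) * R ^ (q - 2) * |t| := by
    intro t ht
    have h1 : |ψ t| = (|t|) ^ (q - 2) * |t| := by
      rw [hψ, abs_mul, abs_of_nonneg (Real.rpow_nonneg (abs_nonneg t) _)]
    rw [h1]
    have h2 : (|t|) ^ (q - 2) ≤ R ^ (q - 2) :=
      Real.rpow_le_rpow (abs_nonneg t) ht (by linarith)
    have h3 : (1:ℝ) ≤ q - 1 := by linarith
    exact mul_le_mul_of_nonneg_right
      (h2.trans (le_mul_of_one_le_left (Real.rpow_nonneg hR _) h3)) (abs_nonneg t)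
  rcases le_total 0 a with ha0 | ha0 <;> rcases le_total 0 b with hb0 | hb0
  · exact P a ⟨ha0, (le_abs_self a).trans ha⟩ b ⟨hb0, (le_abs_self b).trans hb⟩
  · -- b ≤ 0 ≤ a
    have := add_le_add (Q b hb) (Q a ha)
    calc |ψ b - ψ a| ≤ |ψ b| + |ψ a| := abs_sub _ _
      _ ≤ (q - 1) * R ^ (q - 2) * |b| + (q - 1) * R ^ (q - 2) * |a| := this
      _ = (q - 1) * R ^ (q - 2) * (|b| + |a|) := by ring
      _ = (q - 1) * R ^ (q - 2) * |b - a| := by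
          rw [abs_of_nonpos hb0, abs_of_nonneg ha0,
            abs_of_nonpos (by linarith : b - a ≤ 0)]; ring
  · -- a ≤ 0 ≤ b
    have := add_le_add (Q b hb) (Q a ha)
    calc |ψ b - ψ a| ≤ |ψ b| + |ψ a| := abs_sub _ _
      _ ≤ (q - 1) * R ^ (q - 2) * |b| + (q - 1) * R ^ (q - 2) * |a| := this
      _ = (q - 1) * R ^ (q - 2) * (|b| + |a|) := by ring
      _ = (q - 1) * R ^ (q - 2) * |b - a| := by
          rw [abs_of_nonneg hb0, abs_of_nonpos ha0,
            abs_of_nonneg (by linarith : 0 ≤ b - a)]; ring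
  · -- both ≤ 0
    have hb' : -b ∈ Set.Icc (0:ℝ) R := ⟨by linarith, by rw [← abs_neg] at hb; exact (le_abs_self _).trans hb⟩
    have ha' : -a ∈ Set.Icc (0:ℝ) R := ⟨by linarith, by rw [← abs_neg] at ha; exact (le_abs_self _).trans ha⟩
    have := P (-a) ha' (-b) hb'
    rw [hodd, hodd] at this
    calc |ψ b - ψ a| = |(-ψ b) - (-ψ a)| := by rw [← abs_neg]; ring_nf
      _ ≤ (q - 1) * R ^ (q - 2) * |(-b) - (-a)| := this
      _ = (q - 1) * R ^ (q - 2) * |b - a| := by rw [← abs_neg (-b - -a)]; ring_nf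

/-- 1-D second order Taylor bound for `|t|^q`. -/
lemma abs_rpow_taylor {q : ℝ} (hq : 2 ≤ q) {R a b : ℝ} (ha : |a| ≤ R) (hb : |b| ≤ R) :
    |(|b|) ^ q - (|a|) ^ q - q * ((|a|) ^ (q - 2) * a) * (b - a)|
      ≤ q * (q - 1) / 2 * R ^ (q - 2) * (b - a) ^ 2 := by
  have hR : 0 ≤ R := (abs_nonneg a).trans ha
  set ψ : ℝ → ℝ := fun t => (|t|) ^ (q - 2) * t with hψ
  set f : ℝ → ℝ := fun u => |a + u * (b - a)| ^ q with hf
  set f' : ℝ → ℝ := fun u => q * ψ (a + u * (b - a)) * (b - a) with hf'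
  set K : ℝ := q * (q - 1) * R ^ (q - 2) * (b - a) ^ 2 with hK
  have hmem : ∀ u ∈ Set.Icc (0:ℝ) 1, |a + u * (b - a)| ≤ R := by
    intro u hu
    rw [show a + u * (b - a) = (1 - u) * a + u * b by ring]
    calc |(1 - u) * a + u * b| ≤ |(1 - u) * a| + |u * b| := abs_add_le _ _
      _ = (1 - u) * |a| + u * |b| := by
          rw [abs_mul, abs_mul, abs_of_nonneg (by linarith [hu.2] : (0:ℝ) ≤ 1 - u),
            abs_of_nonneg hu.1]
      _ ≤ (1 - u) * R + u * R := add_le_add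
          (mul_le_mul_of_nonneg_left ha (by linarith [hu.2]))
          (mul_le_mul_of_nonneg_left hb hu.1)
      _ = R := by ring
  have hd : ∀ u ∈ Set.Icc (0:ℝ) 1, HasDerivAt f (f' u) u := by
    intro u _
    have hl : HasDerivAt (fun v : ℝ => a + v * (b - a)) (b - a) u := by
      simpa using (hasDerivAt_mul_const (b - a)).const_add a
    have hc := (hasDerivAt_abs_rpow' hq (a + u * (b - a))).comp u hl
    have : f = (fun v : ℝ => |v| ^ q) ∘ fun v : ℝ => a + v * (b - a) := rfl
    rw [this]
    exact hc
  have hcont : ContinuousOn f' (Set.Icc 0 1) := by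
    apply Continuous.continuousOn
    exact (continuous_const.mul ((continuous_psi hq).comp
      (continuous_const.add (continuous_id.mul continuous_const)))).mul continuous_const
  have hlip : ∀ u ∈ Set.Icc (0:ℝ) 1, |f' u - f' 0| ≤ K * u := by
    intro u hu
    have h1 : f' u - f' 0 = q * (b - a) * (ψ (a + u * (b - a)) - ψ (a + 0 * (b - a))) := by
      simp only [hf']; ring
    rw [h1, abs_mul]
    have h2 := psi_lipschitz hq (R := R) (a := a + 0 * (b - a)) (b := a + u * (b - a))
      (hmem 0 ⟨le_refl 0, zero_le_one⟩) (hmem u hu)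
    have h3 : |a + u * (b - a) - (a + 0 * (b - a))| = u * |b - a| := by
      rw [show a + u * (b - a) - (a + 0 * (b - a)) = u * (b - a) by ring, abs_mul,
        abs_of_nonneg hu.1]
    rw [h3] at h2
    calc |q * (b - a)| * |ψ (a + u * (b - a)) - ψ (a + 0 * (b - a))|
        ≤ |q * (b - a)| * ((q - 1) * R ^ (q - 2) * (u * |b - a|)) := by
          exact mul_le_mul_of_nonneg_left h2 (abs_nonneg _)
      _ = q * (q - 1) * R ^ (q - 2) * (|b - a| * |b - a|) * u := by
          rw [abs_mul, abs_of_nonneg (by linarith : (0:ℝ) ≤ q)]; ring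
      _ = K * u := by rw [abs_mul_abs_self, hK]; ring
  have := taylor2 zero_le_one hd hcont hlip
  have hf1 : f 1 = (|b|) ^ q := by rw [hf]; norm_num
  have hf0 : f 0 = (|a|) ^ q := by rw [hf]; norm_num
  have hf'0 : f' 0 = q * ((|a|) ^ (q - 2) * a) * (b - a) := by
    simp only [hf', hψ]; norm_num
  rw [hf1, hf0, hf'0] at this
  calc |(|b|) ^ q - (|a|) ^ q - q * ((|a|) ^ (q - 2) * a) * (b - a)|
      = |(|b|) ^ q - (|a|) ^ q - 1 * (q * ((|a|) ^ (q - 2) * a) * (b - a))| := by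
        rw [one_mul]
    _ ≤ K * 1 ^ 2 / 2 := this
    _ = q * (q - 1) / 2 * R ^ (q - 2) * (b - a) ^ 2 := by rw [hK]; ring


lemma holder1 {d : ℕ} {s : ℕ} (hs : 2 ≤ s) (y w : Fin d → ℝ) :
    |∑ i, (y i) ^ (s - 1) * w i|
      ≤ (∑ i, |y i| ^ s) ^ (((s:ℝ) - 1) / (s:ℝ)) * (∑ i, |w i| ^ s) ^ (1 / (s:ℝ)) := by
  set S : ℝ := (s : ℝ) with hSdef
  have hS1 : (1:ℝ) < S := by rw [hSdef]; exact_mod_cast (by omega : 1 < s)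
  have hS0 : S ≠ 0 := by positivity
  have hS1' : S - 1 ≠ 0 := by intro h; rw [sub_eq_zero] at h; exact hS1.ne' h
  have hcast : ((s - 1 : ℕ) : ℝ) = S - 1 := by
    rw [hSdef]; push_cast [Nat.cast_sub (by omega : 1 ≤ s)]; ring
  have habs : |∑ i, (y i) ^ (s - 1) * w i| ≤ ∑ i, |y i| ^ (s - 1) * |w i| := by
    refine (Finset.abs_sum_le_sum_abs _ _).trans (le_of_eq ?_)
    refine Finset.sum_congr rfl fun i _ => ?_
    rw [abs_mul, abs_pow]
  have hconj : Real.HolderConjugate (S / (S - 1)) S :=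
    (Real.HolderConjugate.conjExponent hS1).symm
  have h := Real.inner_le_Lp_mul_Lq_of_nonneg Finset.univ hconj
    (f := fun i => |y i| ^ (s - 1)) (g := fun i => |w i|)
    (fun i _ => by positivity) (fun i _ => abs_nonneg _)
  have e1 : ∀ i : Fin d, (|y i| ^ (s - 1) : ℝ) ^ (S / (S - 1)) = |y i| ^ s := by
    intro i
    rw [← Real.rpow_natCast |y i| (s - 1), hcast, ← Real.rpow_mul (abs_nonneg _),
      show (S - 1) * (S / (S - 1)) = S by field_simp, hSdef, Real.rpow_natCast]
  have e2 : (1:ℝ) / (S / (S - 1)) = (S - 1) / S := one_div_div _ _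
  have e3 : ∀ i : Fin d, (|w i| : ℝ) ^ S = |w i| ^ s := fun i => by
    rw [hSdef, Real.rpow_natCast]
  simp only [e1, e2, e3] at h
  exact habs.trans h

lemma holder2 {d : ℕ} {s : ℕ} (hs : 2 < s) (y w : Fin d → ℝ) :
    ∑ i, |y i| ^ (s - 2) * (w i) ^ 2
      ≤ (∑ i, |y i| ^ s) ^ (((s:ℝ) - 2) / (s:ℝ)) * (∑ i, |w i| ^ s) ^ (2 / (s:ℝ)) := by
  set S : ℝ := (s : ℝ) with hSdef
  have hS2 : (2:ℝ) < S := by rw [hSdef]; exact_mod_cast hs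
  have hS0 : S ≠ 0 := by positivity
  have hS2' : S - 2 ≠ 0 := by intro h; rw [sub_eq_zero] at h; linarith
  have hcast : ((s - 2 : ℕ) : ℝ) = S - 2 := by
    rw [hSdef]; push_cast [Nat.cast_sub (by omega : 2 ≤ s)]; ring
  have hconj : Real.HolderConjugate (S / (S - 2)) (S / 2) := by
    constructor
    · rw [inv_div, inv_div, inv_one, ← add_div, sub_add_cancel, div_self hS0]
    · exact div_pos (by linarith) (by linarith)
    · exact div_pos (by linarith) (by norm_num)
  have h := Real.inner_le_Lp_mul_Lq_of_nonneg Finset.univ hconj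
    (f := fun i => |y i| ^ (s - 2)) (g := fun i => (w i) ^ 2)
    (fun i _ => by positivity) (fun i _ => sq_nonneg _)
  have e1 : ∀ i : Fin d, (|y i| ^ (s - 2) : ℝ) ^ (S / (S - 2)) = |y i| ^ s := by
    intro i
    rw [← Real.rpow_natCast |y i| (s - 2), hcast, ← Real.rpow_mul (abs_nonneg _),
      show (S - 2) * (S / (S - 2)) = S by field_simp, hSdef, Real.rpow_natCast]
  have e2 : (1:ℝ) / (S / (S - 2)) = (S - 2) / S := one_div_div _ _
  have e3 : ∀ i : Fin d, ((w i : ℝ) ^ 2) ^ (S / 2) = |w i| ^ s := by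
    intro i
    rw [← sq_abs, ← Real.rpow_natCast |w i| 2, ← Real.rpow_mul (abs_nonneg _),
      show ((2:ℕ):ℝ) * (S / 2) = S by push_cast; field_simp, hSdef, Real.rpow_natCast]
  have e4 : (1:ℝ) / (S / 2) = 2 / S := one_div_div _ _
  simp only [e1, e2, e3, e4] at h
  exact h


lemma aux_even_sub_two {s : ℕ} (hse : Even s) : Even (s - 2) := by
  rcases hse with ⟨k, hk⟩
  rcases Nat.eq_zero_or_pos k with rfl | hk0
  · simp [hk]
  · exact ⟨k - 1, by omega⟩

lemma rho_eq {q : ℝ} {s : ℕ} (hs : 2 ≤ s) (hse : Even s) (t : ℝ) :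
    (|t|:ℝ) ^ (q - (s:ℝ)) * t ^ (s - 1) = |t| ^ (q - 2) * t := by
  rcases eq_or_ne t 0 with rfl | ht
  · rw [zero_pow (by omega : s - 1 ≠ 0)]; simp
  · have habs : (0:ℝ) < |t| := abs_pos.2 ht
    have h1 : t ^ (s - 1) = |t| ^ ((s:ℝ) - 2) * t := by
      rw [show s - 1 = (s - 2) + 1 by omega, pow_succ, ← (aux_even_sub_two hse).pow_abs,
        ← Real.rpow_natCast |t| (s - 2),
        show ((s - 2 : ℕ) : ℝ) = (s:ℝ) - 2 by push_cast [Nat.cast_sub hs]; ring]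
    rw [h1, ← mul_assoc, ← Real.rpow_add habs,
      show q - (s:ℝ) + ((s:ℝ) - 2) = q - 2 by ring]

end Aux

theorem stmt4 (d s : ℕ) (hs : 2 ≤ s) (hse : Even s) (q : ℝ) (hq : 2 ≤ q)
    (x z : Fin d → ℝ) (α : ℝ) (hα : 0 < α) :
    |lnorm s (x - α • z) ^ q - lnorm s x ^ q
        + q * α * (lnorm s x ^ (q - (s : ℝ)) * ∑ i, x i ^ (s - 1) * z i)|
      ≤ q * α ^ 2 / 2 * (|q - (s : ℝ)| + ((s : ℝ) - 1)) *
          (lnorm s x + α * lnorm s z) ^ (q - 2) * lnorm s z ^ 2 := by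
  have hs1 : 1 ≤ s := by omega
  have hsne : s ≠ 0 := by omega
  have hS2 : (2:ℝ) ≤ (s:ℝ) := by exact_mod_cast hs
  have hS0 : (0:ℝ) < (s:ℝ) := by linarith
  have hq0 : (0:ℝ) < q := by linarith
  by_cases hdeg : ∃ t0 : ℝ, x = t0 • z
  · obtain ⟨t0, rfl⟩ := hdeg
    by_cases hz : z = 0
    · subst hz
      have h0 : lnorm s (0 : Fin d → ℝ) = 0 := by
        rw [lnorm]
        simp only [Pi.zero_apply, abs_zero, zero_pow hsne, Finset.sum_const_zero]
        exact Real.zero_rpow (one_div_ne_zero hS0.ne')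
      have he : t0 • (0 : Fin d → ℝ) - α • (0 : Fin d → ℝ) = 0 := by simp
      rw [he, smul_zero, h0]
      simp [Real.zero_rpow hq0.ne']
    · -- degenerate, z ≠ 0
      have hApos : 0 < ∑ i, |z i| ^ s := by
        obtain ⟨j, hj⟩ := Function.ne_iff.1 hz
        refine Finset.sum_pos' (fun i _ => by positivity) ⟨j, Finset.mem_univ j, ?_⟩
        have hzj : z j ≠ 0 := hj
        positivity
      have hZpos : 0 < lnorm s z := Real.rpow_pos_of_pos hApos _
      set Z := lnorm s z with hZdef
      have hZA : Z ^ ((s:ℝ)) = ∑ i, |z i| ^ s := by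
        rw [hZdef, lnorm, ← Real.rpow_mul (le_of_lt hApos), one_div_mul_cancel hS0.ne',
          Real.rpow_one]
      have hX : lnorm s (t0 • z) = |t0| * Z := lnorm_smul s hs1 t0 z
      have hXa : lnorm s (t0 • z - α • z) = |t0 - α| * Z := by
        rw [← sub_smul, lnorm_smul s hs1]
      have hsum : ∑ i, (t0 • z) i ^ (s - 1) * z i = t0 ^ (s - 1) * ∑ i, |z i| ^ s := by
        rw [Finset.mul_sum]
        refine Finset.sum_congr rfl fun i _ => ?_
        rw [hse.pow_abs, Pi.smul_apply, smul_eq_mul, mul_pow, mul_assoc, ← pow_succ,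
          Nat.sub_add_cancel hs1]
      rw [hXa, hX, hsum]
      have hZq : (0:ℝ) ≤ Z ^ q := Real.rpow_nonneg hZpos.le q
      -- rewrite LHS
      have e1 : (|t0 - α| * Z) ^ q = |t0 - α| ^ q * Z ^ q :=
        Real.mul_rpow (abs_nonneg _) hZpos.le
      have e2 : (|t0| * Z) ^ q = |t0| ^ q * Z ^ q :=
        Real.mul_rpow (abs_nonneg _) hZpos.le
      have e3 : (|t0| * Z) ^ (q - (s:ℝ)) = |t0| ^ (q - (s:ℝ)) * Z ^ (q - (s:ℝ)) :=
        Real.mul_rpow (abs_nonneg _) hZpos.le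
      have e4 : Z ^ (q - (s:ℝ)) * (∑ i, |z i| ^ s) = Z ^ q := by
        rw [← hZA, ← Real.rpow_add hZpos, show q - (s:ℝ) + (s:ℝ) = q by ring]
      rw [e1, e2, e3]
      have e5 : |t0| ^ (q - (s:ℝ)) * Z ^ (q - (s:ℝ)) * (t0 ^ (s - 1) * ∑ i, |z i| ^ s)
          = (|t0| ^ (q - 2) * t0) * Z ^ q := by
        rw [← rho_eq hs hse t0, ← e4]; ring
      rw [e5]
      have e6 : (|t0| * Z + α * Z) ^ (q - 2) = (|t0| + α) ^ (q - 2) * Z ^ (q - 2) := by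
        rw [show |t0| * Z + α * Z = (|t0| + α) * Z by ring,
          Real.mul_rpow (by positivity) hZpos.le]
      rw [e6]
      have hb' : |t0 - α| ≤ |t0| + α := by
        calc |t0 - α| = |t0 + -α| := by rw [sub_eq_add_neg]
          _ ≤ |t0| + |(-α)| := abs_add_le _ _
          _ = |t0| + α := by rw [abs_neg, abs_of_pos hα]
      have htay := abs_rpow_taylor hq (R := |t0| + α) (a := t0) (b := t0 - α)
        (by linarith [abs_nonneg t0]) hb'
      rw [show t0 - α - t0 = -α by ring, show ((-α):ℝ) ^ 2 = α ^ 2 by ring] at htay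
      rw [show |t0 - α| ^ q - |t0| ^ q - q * (|t0| ^ (q - 2) * t0) * (-α)
          = |t0 - α| ^ q - |t0| ^ q + q * α * (|t0| ^ (q - 2) * t0) by ring] at htay
      have e7 : |t0 - α| ^ q * Z ^ q - |t0| ^ q * Z ^ q
            + q * α * (|t0| ^ (q - 2) * t0 * Z ^ q)
          = (|t0 - α| ^ q - |t0| ^ q + q * α * (|t0| ^ (q - 2) * t0)) * Z ^ q := by ring
      rw [e7, abs_mul, abs_of_nonneg hZq]
      have e8 : Z ^ (q - 2) * Z ^ 2 = Z ^ q := by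
        rw [← Real.rpow_natCast Z 2, ← Real.rpow_add hZpos]
        norm_num
      rw [show q * α ^ 2 / 2 * (|q - (s:ℝ)| + ((s:ℝ) - 1)) * ((|t0| + α) ^ (q - 2) * Z ^ (q - 2)) * Z ^ 2
          = (q * α ^ 2 / 2 * (|q - (s:ℝ)| + ((s:ℝ) - 1)) * (|t0| + α) ^ (q - 2)) * (Z ^ (q - 2) * Z ^ 2) by ring,
        e8]
      refine le_trans (mul_le_mul_of_nonneg_right htay hZq) ?_
      apply mul_le_mul_of_nonneg_right _ hZq
      have hD : q - 1 ≤ |q - (s:ℝ)| + ((s:ℝ) - 1) := by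
        have := le_abs_self (q - (s:ℝ)); linarith
      have hP : (0:ℝ) ≤ (|t0| + α) ^ (q - 2) := Real.rpow_nonneg (by positivity) _
      nlinarith [mul_nonneg (mul_nonneg hq0.le (sq_nonneg α))
        (mul_nonneg hP (sub_nonneg.2 hD))]
  · -- main case
    set F : ℝ → ℝ := fun t => ∑ i, (x i - t * z i) ^ s with hFdef
    set G : ℝ → ℝ := fun t => ∑ i, (x i - t * z i) ^ (s - 1) * z i with hGdef
    set H : ℝ → ℝ := fun t => ∑ i, (x i - t * z i) ^ (s - 2) * z i ^ 2 with hHdef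
    have hFabs : ∀ t : ℝ, F t = ∑ i, |x i - t * z i| ^ s := fun t =>
      Finset.sum_congr rfl fun i _ => (hse.pow_abs _).symm
    have hFnn : ∀ t : ℝ, 0 ≤ F t := fun t => by
      rw [hFabs]; exact Finset.sum_nonneg fun i _ => by positivity
    have hFpos : ∀ t : ℝ, 0 < F t := by
      intro t
      rcases (hFnn t).lt_or_eq with h | h
      · exact h
      · exfalso
        apply hdeg
        refine ⟨t, funext fun i => ?_⟩
        have h0 := (Finset.sum_eq_zero_iff_of_nonneg
          (fun i (_ : i ∈ Finset.univ) => by positivity :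
            ∀ i ∈ Finset.univ, (0:ℝ) ≤ |x i - t * z i| ^ s)).1 (by rw [← hFabs, ← h])
        have h1 := h0 i (Finset.mem_univ i)
        have h2 : |x i - t * z i| = 0 := by
          have := pow_eq_zero_iff hsne |>.1 h1
          exact this
        have h3 : x i - t * z i = 0 := abs_eq_zero.1 h2
        simp only [Pi.smul_apply, smul_eq_mul]
        linarith
    have hlnormF : ∀ t : ℝ, lnorm s (x - t • z) = F t ^ (1 / (s:ℝ)) := by
      intro t
      rw [lnorm, hFabs]
      congr 1
    have hFle : ∀ t ∈ Set.Icc (0:ℝ) α, F t ^ (1/(s:ℝ)) ≤ lnorm s x + α * lnorm s z := by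
      intro t ht
      rw [← hlnormF t]
      have h1 : x - t • z = x + (-t) • z := by funext i; simp; ring
      calc lnorm s (x - t • z) = lnorm s (x + (-t) • z) := by rw [h1]
        _ ≤ lnorm s x + lnorm s ((-t) • z) := lnorm_add_le s hs1 _ _
        _ = lnorm s x + |(-t)| * lnorm s z := by rw [lnorm_smul s hs1]
        _ ≤ lnorm s x + α * lnorm s z := by
            rw [abs_neg, abs_of_nonneg ht.1]
            exact add_le_add le_rfl
              (mul_le_mul_of_nonneg_right ht.2 (lnorm_nonneg s z))
    -- derivatives
    have hF' : ∀ t : ℝ, HasDerivAt F (-(s:ℝ) * G t) t := by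
      intro t
      have hterm : ∀ i : Fin d, HasDerivAt (fun t : ℝ => (x i - t * z i) ^ s)
          ((s:ℝ) * (x i - t * z i) ^ (s - 1) * (-(z i))) t := fun i =>
        ((hasDerivAt_mul_const (z i)).const_sub (x i)).pow s
      have hsum := HasDerivAt.fun_sum (fun i (_ : i ∈ Finset.univ) => hterm i)
      refine hsum.congr_deriv (Eq.symm ?_)
      rw [hGdef, Finset.mul_sum]
      exact Finset.sum_congr rfl fun i _ => by ring
    have hG' : ∀ t : ℝ, HasDerivAt G (-((s:ℝ) - 1) * H t) t := by
      intro t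
      have hterm : ∀ i : Fin d, HasDerivAt
          (fun t : ℝ => (x i - t * z i) ^ (s - 1) * z i)
          ((((s - 1 : ℕ)):ℝ) * (x i - t * z i) ^ (s - 1 - 1) * (-(z i)) * z i) t :=
        fun i => (((hasDerivAt_mul_const (z i)).const_sub (x i)).pow (s - 1)).mul_const (z i)
      have hsum := HasDerivAt.fun_sum (fun i (_ : i ∈ Finset.univ) => hterm i)
      refine hsum.congr_deriv (Eq.symm ?_)
      rw [hHdef, Finset.mul_sum]
      refine Finset.sum_congr rfl fun i _ => ?_
      rw [show s - 1 - 1 = s - 2 from by omega, Nat.cast_sub hs1]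
      push_cast
      ring
    set df : ℝ → ℝ := fun t => -q * (F t ^ ((q - (s:ℝ))/(s:ℝ)) * G t) with hdfdef
    have hh' : ∀ t : ℝ, HasDerivAt (fun u => F u ^ (q / (s:ℝ))) (df t) t := by
      intro t
      have h1 := (hF' t).rpow_const (p := q / (s:ℝ)) (Or.inl (hFpos t).ne')
      convert h1 using 1
      rw [hdfdef, show q / (s:ℝ) - 1 = (q - (s:ℝ))/(s:ℝ) by field_simp]
      field_simp
    set D : ℝ → ℝ := fun t => -q * (((-(s:ℝ) * G t) * ((q - (s:ℝ))/(s:ℝ)) *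
        F t ^ ((q - (s:ℝ))/(s:ℝ) - 1)) * G t
        + F t ^ ((q - (s:ℝ))/(s:ℝ)) * (-((s:ℝ) - 1) * H t)) with hDdef
    have hdf' : ∀ t : ℝ, HasDerivAt df (D t) t := fun t =>
      HasDerivAt.const_mul (-q)
        (((hF' t).rpow_const (Or.inl (hFpos t).ne')).mul (hG' t))
    set M : ℝ := q * ((|q - (s:ℝ)| + ((s:ℝ) - 1)) *
        ((lnorm s x + α * lnorm s z) ^ (q - 2) * lnorm s z ^ 2)) with hMdef
    have hZ2 : (0:ℝ) ≤ lnorm s z ^ 2 := sq_nonneg _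
    have hDb : ∀ t ∈ Set.Icc (0:ℝ) α, |D t| ≤ M := by
      intro t ht
      have hP := hFpos t
      have step1 : D t = q * (q - (s:ℝ)) * (F t ^ ((q - (s:ℝ))/(s:ℝ) - 1) * G t ^ 2)
          + q * ((s:ℝ) - 1) * (F t ^ ((q - (s:ℝ))/(s:ℝ)) * H t) := by
        rw [hDdef]
        field_simp
        ring
      have hZrfl : (∑ i, |z i| ^ s) ^ (1/(s:ℝ)) = lnorm s z := rfl
      have hGb : |G t| ≤ F t ^ (((s:ℝ) - 1)/(s:ℝ)) * lnorm s z := by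
        have h := holder1 hs (fun i => x i - t * z i) z
        rw [hZrfl, ← hFabs t] at h
        exact h
      have hHnn : 0 ≤ H t := Finset.sum_nonneg fun i _ =>
        mul_nonneg ((aux_even_sub_two hse).pow_nonneg _) (sq_nonneg _)
      have hHb : H t ≤ F t ^ (((s:ℝ) - 2)/(s:ℝ)) * lnorm s z ^ 2 := by
        rcases eq_or_lt_of_le hs with hs2 | hs2
        · -- s = 2
          subst hs2
          have h1 : H t = ∑ i, z i ^ 2 := by
            rw [hHdef]; simp
          have h2 : lnorm 2 z ^ 2 = ∑ i, z i ^ 2 := by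
            rw [lnorm, ← Real.rpow_natCast _ 2,
              ← Real.rpow_mul (Finset.sum_nonneg fun i _ => by positivity)]
            norm_num
          rw [h1, h2]
          norm_num
        · -- 2 < s
          have h := holder2 hs2 (fun i => x i - t * z i) z
          have hH2 : H t = ∑ i, |x i - t * z i| ^ (s - 2) * z i ^ 2 := by
            rw [hHdef]
            exact Finset.sum_congr rfl fun i _ => by
              rw [(aux_even_sub_two hse).pow_abs]
          have hZ2' : (∑ i, |z i| ^ s) ^ (2/(s:ℝ)) = lnorm s z ^ 2 := by
            rw [lnorm, ← Real.rpow_natCast _ 2,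
              ← Real.rpow_mul (Finset.sum_nonneg fun i _ => by positivity),
              show 1/(s:ℝ) * ((2:ℕ):ℝ) = 2/(s:ℝ) by push_cast; ring]
          rw [← hFabs t, hZ2'] at h
          rw [hH2]
          exact h
      have hG2 : G t ^ 2 ≤ F t ^ ((2*(s:ℝ) - 2)/(s:ℝ)) * lnorm s z ^ 2 := by
        calc G t ^ 2 = |G t| ^ 2 := (sq_abs _).symm
          _ ≤ (F t ^ (((s:ℝ) - 1)/(s:ℝ)) * lnorm s z) ^ 2 :=
              pow_le_pow_left₀ (abs_nonneg _) hGb 2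
          _ = F t ^ ((2*(s:ℝ) - 2)/(s:ℝ)) * lnorm s z ^ 2 := by
              rw [mul_pow, ← Real.rpow_natCast (F t ^ (((s:ℝ) - 1)/(s:ℝ))) 2,
                ← Real.rpow_mul hP.le,
                show ((s:ℝ) - 1)/(s:ℝ) * ((2:ℕ):ℝ) = (2*(s:ℝ) - 2)/(s:ℝ) by push_cast; ring]
      have hT1 : F t ^ ((q - (s:ℝ))/(s:ℝ) - 1) * G t ^ 2
          ≤ F t ^ ((q - 2)/(s:ℝ)) * lnorm s z ^ 2 := by
        calc F t ^ ((q - (s:ℝ))/(s:ℝ) - 1) * G t ^ 2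
            ≤ F t ^ ((q - (s:ℝ))/(s:ℝ) - 1) * (F t ^ ((2*(s:ℝ) - 2)/(s:ℝ)) * lnorm s z ^ 2) :=
              mul_le_mul_of_nonneg_left hG2 (Real.rpow_nonneg hP.le _)
          _ = (F t ^ ((q - (s:ℝ))/(s:ℝ) - 1) * F t ^ ((2*(s:ℝ) - 2)/(s:ℝ))) * lnorm s z ^ 2 := by
              ring
          _ = F t ^ ((q - 2)/(s:ℝ)) * lnorm s z ^ 2 := by
              rw [← Real.rpow_add hP,
                show (q - (s:ℝ))/(s:ℝ) - 1 + (2*(s:ℝ) - 2)/(s:ℝ) = (q - 2)/(s:ℝ) by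
                  field_simp; ring]
      have hT2 : F t ^ ((q - (s:ℝ))/(s:ℝ)) * H t
          ≤ F t ^ ((q - 2)/(s:ℝ)) * lnorm s z ^ 2 := by
        calc F t ^ ((q - (s:ℝ))/(s:ℝ)) * H t
            ≤ F t ^ ((q - (s:ℝ))/(s:ℝ)) * (F t ^ (((s:ℝ) - 2)/(s:ℝ)) * lnorm s z ^ 2) :=
              mul_le_mul_of_nonneg_left hHb (Real.rpow_nonneg hP.le _)
          _ = (F t ^ ((q - (s:ℝ))/(s:ℝ)) * F t ^ (((s:ℝ) - 2)/(s:ℝ))) * lnorm s z ^ 2 := by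
              ring
          _ = F t ^ ((q - 2)/(s:ℝ)) * lnorm s z ^ 2 := by
              rw [← Real.rpow_add hP,
                show (q - (s:ℝ))/(s:ℝ) + ((s:ℝ) - 2)/(s:ℝ) = (q - 2)/(s:ℝ) by field_simp; ring]
      have hFq2 : F t ^ ((q - 2)/(s:ℝ)) ≤ (lnorm s x + α * lnorm s z) ^ (q - 2) := by
        rw [show (q - 2)/(s:ℝ) = 1/(s:ℝ) * (q - 2) by ring, Real.rpow_mul (hFnn t)]
        exact Real.rpow_le_rpow (Real.rpow_nonneg (hFnn t) _) (hFle t ht) (by linarith)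
      have hT1' : F t ^ ((q - (s:ℝ))/(s:ℝ) - 1) * G t ^ 2
          ≤ (lnorm s x + α * lnorm s z) ^ (q - 2) * lnorm s z ^ 2 :=
        hT1.trans (mul_le_mul_of_nonneg_right hFq2 hZ2)
      have hT2' : F t ^ ((q - (s:ℝ))/(s:ℝ)) * H t
          ≤ (lnorm s x + α * lnorm s z) ^ (q - 2) * lnorm s z ^ 2 :=
        hT2.trans (mul_le_mul_of_nonneg_right hFq2 hZ2)
      have hT1nn : 0 ≤ F t ^ ((q - (s:ℝ))/(s:ℝ) - 1) * G t ^ 2 :=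
        mul_nonneg (Real.rpow_nonneg hP.le _) (sq_nonneg _)
      have hT2nn : 0 ≤ F t ^ ((q - (s:ℝ))/(s:ℝ)) * H t :=
        mul_nonneg (Real.rpow_nonneg hP.le _) hHnn
      rw [step1, hMdef]
      have habs1 : |q * (q - (s:ℝ)) * (F t ^ ((q - (s:ℝ))/(s:ℝ) - 1) * G t ^ 2)|
          ≤ q * |q - (s:ℝ)| * ((lnorm s x + α * lnorm s z) ^ (q - 2) * lnorm s z ^ 2) := by
        rw [abs_mul, abs_mul, abs_of_nonneg hq0.le, abs_of_nonneg hT1nn]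
        exact mul_le_mul_of_nonneg_left hT1' (mul_nonneg hq0.le (abs_nonneg _))
      have habs2 : |q * ((s:ℝ) - 1) * (F t ^ ((q - (s:ℝ))/(s:ℝ)) * H t)|
          ≤ q * ((s:ℝ) - 1) * ((lnorm s x + α * lnorm s z) ^ (q - 2) * lnorm s z ^ 2) := by
        rw [abs_mul, abs_mul, abs_of_nonneg hq0.le, abs_of_nonneg hT2nn,
          abs_of_nonneg (by linarith : (0:ℝ) ≤ (s:ℝ) - 1)]
        exact mul_le_mul_of_nonneg_left hT2' (mul_nonneg hq0.le (by linarith))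
      calc |q * (q - (s:ℝ)) * (F t ^ ((q - (s:ℝ))/(s:ℝ) - 1) * G t ^ 2)
            + q * ((s:ℝ) - 1) * (F t ^ ((q - (s:ℝ))/(s:ℝ)) * H t)|
          ≤ |q * (q - (s:ℝ)) * (F t ^ ((q - (s:ℝ))/(s:ℝ) - 1) * G t ^ 2)|
            + |q * ((s:ℝ) - 1) * (F t ^ ((q - (s:ℝ))/(s:ℝ)) * H t)| := abs_add_le _ _
        _ ≤ q * |q - (s:ℝ)| * ((lnorm s x + α * lnorm s z) ^ (q - 2) * lnorm s z ^ 2)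
            + q * ((s:ℝ) - 1) * ((lnorm s x + α * lnorm s z) ^ (q - 2) * lnorm s z ^ 2) :=
            add_le_add habs1 habs2
        _ = q * ((|q - (s:ℝ)| + ((s:ℝ) - 1)) *
            ((lnorm s x + α * lnorm s z) ^ (q - 2) * lnorm s z ^ 2)) := by ring
    have hlip : ∀ t ∈ Set.Icc (0:ℝ) α, |df t - df 0| ≤ M * t := by
      intro t ht
      have h := (convex_Icc (0:ℝ) α).norm_image_sub_le_of_norm_hasDerivWithin_le
        (fun u _ => (hdf' u).hasDerivWithinAt)
        (fun u hu => by rw [Real.norm_eq_abs]; exact hDb u hu)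
        (Set.left_mem_Icc.2 hα.le) ht
      rw [Real.norm_eq_abs, Real.norm_eq_abs, sub_zero, abs_of_nonneg ht.1] at h
      exact h
    have hFc : Continuous F := by
      rw [hFdef]
      exact continuous_finset_sum _ fun i _ =>
        (continuous_const.sub (continuous_id.mul continuous_const)).pow s
    have hGc : Continuous G := by
      rw [hGdef]
      exact continuous_finset_sum _ fun i _ =>
        ((continuous_const.sub (continuous_id.mul continuous_const)).pow (s - 1)).mul
          continuous_const
    have hcont : ContinuousOn df (Set.Icc 0 α) := by
      rw [hdfdef]
      exact continuousOn_const.mul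
        ((hFc.continuousOn.rpow_const fun t _ => Or.inl (hFpos t).ne').mul hGc.continuousOn)
    have htay := taylor2 hα.le (fun t _ => hh' t) hcont hlip
    -- conversions
    have h20 : lnorm s x = F 0 ^ (1/(s:ℝ)) := by
      have := hlnormF 0
      simpa using this
    have ee1 : lnorm s (x - α • z) ^ q = F α ^ (q/(s:ℝ)) := by
      rw [hlnormF α, ← Real.rpow_mul (hFnn α), show 1/(s:ℝ) * q = q/(s:ℝ) by ring]
    have ee2 : lnorm s x ^ q = F 0 ^ (q/(s:ℝ)) := by
      rw [h20, ← Real.rpow_mul (hFnn 0), show 1/(s:ℝ) * q = q/(s:ℝ) by ring]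
    have ee3 : lnorm s x ^ (q - (s:ℝ)) = F 0 ^ ((q - (s:ℝ))/(s:ℝ)) := by
      rw [h20, ← Real.rpow_mul (hFnn 0), show 1/(s:ℝ) * (q - (s:ℝ)) = (q - (s:ℝ))/(s:ℝ) by ring]
    have ee4 : G 0 = ∑ i, x i ^ (s - 1) * z i := by
      rw [hGdef]
      exact Finset.sum_congr rfl fun i _ => by norm_num
    rw [ee1, ee2, ee3, ← ee4]
    have efin : F α ^ (q/(s:ℝ)) - F 0 ^ (q/(s:ℝ)) + q * α * (F 0 ^ ((q - (s:ℝ))/(s:ℝ)) * G 0)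
        = F α ^ (q/(s:ℝ)) - F 0 ^ (q/(s:ℝ)) - α * df 0 := by
      rw [hdfdef]; ring
    rw [efin]
    refine htay.trans ?_
    rw [hMdef]
    exact le_of_eq (by ring)
end

section
/- Let x_1, ..., x_n be independent mean-zero random vectors in R^d with E|x_i|_∞^q < ∞ for q ≥ 2. Then ‖max_{1≤j≤d} |∑_{i=1}^n x_{ij}|‖_q² ≤ e²(max{q, log d} − 1) ∑_{i=1}^n ‖max_{1≤j≤d} |x_{ij}|‖_q², where x_{ij} denotes the j-th coordinate of x_i. -/
open Finset Real MeasureTheory ProbabilityTheory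

-- (x^2)^(p) = |x|^(2p)
lemma my_sq_rpow (x p : ℝ) : ((x^2 : ℝ)) ^ p = |x| ^ (2*p) := by
  rw [← sq_abs, ← Real.rpow_natCast |x| 2, ← Real.rpow_mul (abs_nonneg x)]
  norm_num

lemma my_pow_aux1 {s : ℝ} (hs : 2 ≤ s) (y : ℝ) :
    HasDerivAt (fun y : ℝ => (y^2) ^ (s/2)) (s * (y^2) ^ ((s-2)/2) * y) y := by
  have h := (hasDerivAt_pow 2 y).rpow_const (p := s/2) (Or.inr (by linarith))
  convert h using 1
  have : (y^2 : ℝ) ^ (s/2 - 1) = (y^2) ^ ((s-2)/2) := by ring_nf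
  rw [this]; ring

lemma my_pow_aux2 {s : ℝ} (hs : 2 ≤ s) (y : ℝ) :
    HasDerivAt (fun y : ℝ => (y^2) ^ ((s-2)/2) * y) ((s-1) * (y^2) ^ ((s-2)/2)) y := by
  rcases eq_or_lt_of_le hs with hs2 | hs2
  · -- s = 2
    subst hs2
    simp only [sub_self, zero_div, Real.rpow_zero, one_mul, mul_one]
    have h := hasDerivAt_id y
    exact h.congr_deriv (by norm_num)
  rcases eq_or_ne y 0 with rfl | hy
  · -- y = 0, s > 2
    have hval : ((0:ℝ)^2) ^ ((s-2)/2) = 0 := by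
      rw [zero_pow (by norm_num), Real.zero_rpow (ne_of_gt (by linarith))]
    rw [hasDerivAt_iff_tendsto_slope]
    have hslope : Set.EqOn (slope (fun y : ℝ => (y^2) ^ ((s-2)/2) * y) 0)
        (fun y : ℝ => (y^2) ^ ((s-2)/2)) {(0:ℝ)}ᶜ := by
      intro z hz
      have hz0 : z ≠ 0 := hz
      simp [slope, hval, sub_zero, mul_div_assoc, mul_div_cancel_right₀ _ hz0]
      field_simp
    rw [Filter.tendsto_congr' (eventuallyEq_nhdsWithin_of_eqOn hslope)]
    have : ContinuousAt (fun z : ℝ => (z^2) ^ ((s-2)/2)) 0 := by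
      apply ContinuousAt.rpow_const (by fun_prop)
      right; linarith
    have h0 : ((s:ℝ)-1) * ((0:ℝ)^2) ^ ((s-2)/2) = 0 := by rw [hval]; ring
    rw [h0]
    have := this.continuousWithinAt (s := {(0:ℝ)}ᶜ)
    simpa [ContinuousWithinAt, hval,
      Real.zero_rpow (ne_of_gt (show (0:ℝ) < (s-2)/2 by linarith))] using this
  · -- y ≠ 0
    have hy2 : (y^2 : ℝ) ≠ 0 := pow_ne_zero 2 hy
    have h1 : HasDerivAt (fun y : ℝ => (y^2) ^ ((s-2)/2))
        ((s-2)/2 * (y^2) ^ ((s-2)/2 - 1) * (2*y)) y := by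
      have h := (hasDerivAt_pow 2 y).rpow_const (p := (s-2)/2) (Or.inl hy2)
      convert h using 1
      simp [pow_one]; ring
    have h2 := h1.mul (hasDerivAt_id y)
    refine h2.congr_deriv ?_
    have hxp : (y^2 : ℝ) ^ ((s-2)/2 - 1) * y^2 = (y^2) ^ ((s-2)/2) := by
      have hpos : (0:ℝ) < y^2 := by positivity
      calc (y^2 : ℝ) ^ ((s-2)/2 - 1) * y^2 = (y^2) ^ ((s-2)/2 - 1) * (y^2) ^ (1:ℝ) := by
            rw [Real.rpow_one]
        _ = (y^2) ^ ((s-2)/2 - 1 + 1) := (Real.rpow_add hpos _ _).symm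
        _ = (y^2) ^ ((s-2)/2) := by norm_num
    simp only [id_eq, mul_one]
    nlinarith [hxp]


lemma my_holder_sum {d : ℕ} {θ : ℝ} (hθ0 : 0 ≤ θ) (hθ1 : θ ≤ 1) (a b : Fin d → ℝ)
    (ha : ∀ j, 0 ≤ a j) (hb : ∀ j, 0 ≤ b j) :
    ∑ j, (a j) ^ θ * (b j) ^ (1-θ) ≤ (∑ j, a j) ^ θ * (∑ j, b j) ^ (1-θ) := by
  rcases eq_or_lt_of_le hθ0 with rfl | hθ0'
  · simp
  rcases eq_or_lt_of_le hθ1 with rfl | hθ1'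
  · simp
  have hA : 0 ≤ ∑ j, a j := Finset.sum_nonneg fun j _ => ha j
  have hB : 0 ≤ ∑ j, b j := Finset.sum_nonneg fun j _ => hb j
  rcases eq_or_lt_of_le hA with hA0 | hA0
  · have haj : ∀ j, a j = 0 := by
      intro j
      have := Finset.sum_eq_zero_iff_of_nonneg (fun j _ => ha j) |>.1 hA0.symm
      exact this j (Finset.mem_univ j)
    have : ∀ j, (a j) ^ θ * (b j) ^ (1-θ) = 0 := by
      intro j; rw [haj j, Real.zero_rpow (ne_of_gt hθ0')]; ring
    rw [Finset.sum_congr rfl (fun j _ => this j), Finset.sum_const_zero]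
    exact mul_nonneg (Real.rpow_nonneg hA _) (Real.rpow_nonneg hB _)
  rcases eq_or_lt_of_le hB with hB0 | hB0
  · have hbj : ∀ j, b j = 0 := by
      intro j
      have := Finset.sum_eq_zero_iff_of_nonneg (fun j _ => hb j) |>.1 hB0.symm
      exact this j (Finset.mem_univ j)
    have : ∀ j, (a j) ^ θ * (b j) ^ (1-θ) = 0 := by
      intro j; rw [hbj j, Real.zero_rpow (by linarith)]; ring
    rw [Finset.sum_congr rfl (fun j _ => this j), Finset.sum_const_zero]
    exact mul_nonneg (Real.rpow_nonneg hA _) (Real.rpow_nonneg hB _)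
  set A := ∑ j, a j
  set B := ∑ j, b j
  have key : ∀ j, (a j) ^ θ * (b j) ^ (1-θ) ≤
      A ^ θ * B ^ (1-θ) * (θ * (a j / A) + (1-θ) * (b j / B)) := by
    intro j
    have h1 : (a j) ^ θ * (b j) ^ (1-θ)
        = A ^ θ * B ^ (1-θ) * ((a j / A) ^ θ * (b j / B) ^ (1-θ)) := by
      rw [Real.div_rpow (ha j) (le_of_lt hA0), Real.div_rpow (hb j) (le_of_lt hB0)]
      field_simp
    rw [h1]
    have h2 := Real.geom_mean_le_arith_mean2_weighted (w₁ := θ) (w₂ := 1-θ)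
      (p₁ := a j / A) (p₂ := b j / B) (le_of_lt hθ0') (by linarith)
      (div_nonneg (ha j) hA) (div_nonneg (hb j) hB) (by ring)
    have h3 : (0:ℝ) ≤ A ^ θ * B ^ (1-θ) := by positivity
    exact mul_le_mul_of_nonneg_left h2 h3
  calc ∑ j, (a j) ^ θ * (b j) ^ (1-θ)
      ≤ ∑ j, A ^ θ * B ^ (1-θ) * (θ * (a j / A) + (1-θ) * (b j / B)) :=
        Finset.sum_le_sum fun j _ => key j
    _ = A ^ θ * B ^ (1-θ) * (θ * (A / A) + (1-θ) * (B / B)) := by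
        rw [← Finset.mul_sum]
        congr 1
        rw [Finset.sum_add_distrib, ← Finset.mul_sum, ← Finset.mul_sum,
          ← Finset.sum_div, ← Finset.sum_div]
    _ = A ^ θ * B ^ (1-θ) := by
        rw [div_self (ne_of_gt hA0), div_self (ne_of_gt hB0)]; ring

lemma my_holder_int {Ω : Type*} [MeasurableSpace Ω] (μ : Measure Ω) [IsProbabilityMeasure μ]
    {θ : ℝ} (hθ0 : 0 ≤ θ) (hθ1 : θ ≤ 1) (f g : Ω → ℝ)
    (hf : ∀ ω, 0 ≤ f ω) (hg : ∀ ω, 0 ≤ g ω)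
    (hfi : Integrable f μ) (hgi : Integrable g μ) :
    ∫ ω, (f ω) ^ θ * (g ω) ^ (1-θ) ∂μ ≤ (∫ ω, f ω ∂μ) ^ θ * (∫ ω, g ω ∂μ) ^ (1-θ) := by
  rcases eq_or_lt_of_le hθ0 with rfl | hθ0'
  · simp
  rcases eq_or_lt_of_le hθ1 with rfl | hθ1'
  · simp
  have hA : 0 ≤ ∫ ω, f ω ∂μ := integral_nonneg hf
  have hB : 0 ≤ ∫ ω, g ω ∂μ := integral_nonneg hg
  rcases eq_or_lt_of_le hA with hA0 | hA0
  · have hf0 : f =ᵐ[μ] 0 := by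
      rw [← integral_eq_zero_iff_of_nonneg hf hfi]
      exact hA0.symm
    have hint0 : (fun ω => (f ω) ^ θ * (g ω) ^ (1-θ)) =ᵐ[μ] 0 := by
      filter_upwards [hf0] with ω hω
      simp only [Pi.zero_apply] at hω ⊢
      rw [hω, Real.zero_rpow (ne_of_gt hθ0'), zero_mul]
    rw [integral_congr_ae hint0]
    simp only [Pi.zero_apply, integral_zero]
    exact mul_nonneg (Real.rpow_nonneg hA _) (Real.rpow_nonneg hB _)
  rcases eq_or_lt_of_le hB with hB0 | hB0
  · have hg0 : g =ᵐ[μ] 0 := by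
      rw [← integral_eq_zero_iff_of_nonneg hg hgi]
      exact hB0.symm
    have hint0 : (fun ω => (f ω) ^ θ * (g ω) ^ (1-θ)) =ᵐ[μ] 0 := by
      filter_upwards [hg0] with ω hω
      simp only [Pi.zero_apply] at hω ⊢
      rw [hω, Real.zero_rpow (by linarith), mul_zero]
    rw [integral_congr_ae hint0]
    simp only [Pi.zero_apply, integral_zero]
    exact mul_nonneg (Real.rpow_nonneg hA _) (Real.rpow_nonneg hB _)
  set A := ∫ ω, f ω ∂μ
  set B := ∫ ω, g ω ∂μ
  have key : ∀ ω, (f ω) ^ θ * (g ω) ^ (1-θ) ≤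
      A ^ θ * B ^ (1-θ) * (θ * (f ω / A) + (1-θ) * (g ω / B)) := by
    intro ω
    have h1 : (f ω) ^ θ * (g ω) ^ (1-θ)
        = A ^ θ * B ^ (1-θ) * ((f ω / A) ^ θ * (g ω / B) ^ (1-θ)) := by
      rw [Real.div_rpow (hf ω) hA, Real.div_rpow (hg ω) hB]
      field_simp
    rw [h1]
    have h2 := Real.geom_mean_le_arith_mean2_weighted (w₁ := θ) (w₂ := 1-θ)
      (p₁ := f ω / A) (p₂ := g ω / B) (le_of_lt hθ0') (by linarith)
      (div_nonneg (hf ω) hA) (div_nonneg (hg ω) hB) (by ring)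
    have h3 : (0:ℝ) ≤ A ^ θ * B ^ (1-θ) := by positivity
    exact mul_le_mul_of_nonneg_left h2 h3
  have hbi : Integrable (fun ω => A ^ θ * B ^ (1-θ) * (θ * (f ω / A) + (1-θ) * (g ω / B))) μ := by
    apply Integrable.const_mul
    apply Integrable.add
    · exact ((hfi.div_const A).const_mul θ)
    · exact ((hgi.div_const B).const_mul (1-θ))
  calc ∫ ω, (f ω) ^ θ * (g ω) ^ (1-θ) ∂μ
      ≤ ∫ ω, A ^ θ * B ^ (1-θ) * (θ * (f ω / A) + (1-θ) * (g ω / B)) ∂μ := by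
        apply integral_mono_of_nonneg
        · filter_upwards with ω
          exact mul_nonneg (Real.rpow_nonneg (hf ω) _) (Real.rpow_nonneg (hg ω) _)
        · exact hbi
        · filter_upwards with ω
          exact key ω
    _ = A ^ θ * B ^ (1-θ) := by
        rw [integral_const_mul]
        have : ∫ ω, (θ * (f ω / A) + (1-θ) * (g ω / B)) ∂μ
            = θ * (A / A) + (1-θ) * (B / B) := by
          rw [integral_add (((hfi.div_const A).const_mul θ)) (((hgi.div_const B).const_mul (1-θ))),
            integral_const_mul, integral_const_mul, integral_div, integral_div]
        rw [this, div_self (ne_of_gt hA0), div_self (ne_of_gt hB0)]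
        ring


noncomputable def myG {d : ℕ} (s ε : ℝ) (w : Fin d → ℝ) : ℝ :=
  (∑ j, ((w j)^2) ^ (s/2)) + ε ^ s

noncomputable def myK {d : ℕ} (s : ℝ) (v : Fin d → ℝ) : ℝ :=
  (∑ j, ((v j)^2) ^ (s/2)) ^ (1/s)

section Det

variable {d : ℕ} {s q ε : ℝ}

lemma myG_pos (hs : 2 ≤ s) (hε : 0 < ε) (w : Fin d → ℝ) : 0 < myG s ε w := by
  have h1 : (0:ℝ) < ε ^ s := Real.rpow_pos_of_pos hε s
  have h2 : (0:ℝ) ≤ ∑ j, ((w j)^2) ^ (s/2) :=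
    Finset.sum_nonneg fun j _ => Real.rpow_nonneg (sq_nonneg _) _
  unfold myG; linarith

lemma myK_nonneg (s : ℝ) (v : Fin d → ℝ) : 0 ≤ myK s v :=
  Real.rpow_nonneg (Finset.sum_nonneg fun j _ => Real.rpow_nonneg (sq_nonneg _) _) _

-- derivative of t ↦ myG s ε (y + t v)
lemma myG_hasDeriv (hs : 2 ≤ s) (y v : Fin d → ℝ) (t : ℝ) :
    HasDerivAt (fun t => myG s ε (fun j => y j + t * v j))
      (s * ∑ j, ((y j + t * v j)^2) ^ ((s-2)/2) * (y j + t * v j) * v j) t := by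
  unfold myG
  rw [Finset.mul_sum]
  apply HasDerivAt.add_const
  apply HasDerivAt.fun_sum
  intro j _
  have haff : HasDerivAt (fun t => y j + t * v j) (v j) t := by
    simpa using ((hasDerivAt_id t).mul_const (v j)).const_add (y j)
  have := (my_pow_aux1 hs (y j + t * v j)).comp t haff
  refine this.congr_deriv ?_
  ring

lemma myG1_hasDeriv (hs : 2 ≤ s) (y v : Fin d → ℝ) (t : ℝ) :
    HasDerivAt (fun t => s * ∑ j, ((y j + t * v j)^2) ^ ((s-2)/2) * (y j + t * v j) * v j)
      (s * (s-1) * ∑ j, ((y j + t * v j)^2) ^ ((s-2)/2) * (v j)^2) t := by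
  have : ∀ t : ℝ, s * ∑ j, ((y j + t * v j)^2) ^ ((s-2)/2) * (y j + t * v j) * v j
      = ∑ j, s * (((y j + t * v j)^2) ^ ((s-2)/2) * (y j + t * v j) * v j) := by
    intro t; rw [Finset.mul_sum]
  simp only [this]
  have h2 : s * (s-1) * ∑ j, ((y j + t * v j)^2) ^ ((s-2)/2) * (v j)^2
      = ∑ j, s * ((s-1) * ((y j + t * v j)^2) ^ ((s-2)/2) * (v j * v j)) := by
    rw [Finset.mul_sum]; congr 1; funext j; ring
  rw [h2]
  apply HasDerivAt.fun_sum
  intro j _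
  apply HasDerivAt.const_mul
  have haff : HasDerivAt (fun t => y j + t * v j) (v j) t := by
    simpa using ((hasDerivAt_id t).mul_const (v j)).const_add (y j)
  have hcomp := (my_pow_aux2 hs (y j + t * v j)).comp t haff
  have := hcomp.mul_const (v j)
  refine this.congr_deriv ?_
  ring

-- Hölder bound (a)
lemma myG2_bound (hs : 2 ≤ s) (hε : 0 < ε) (w v : Fin d → ℝ) :
    ∑ j, ((w j)^2) ^ ((s-2)/2) * (v j)^2 ≤ (myG s ε w) ^ ((s-2)/s) * (myK s v)^2 := by
  have hs0 : (0:ℝ) < s := by linarith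
  have key := my_holder_sum (θ := (s-2)/s) (div_nonneg (by linarith) (by linarith)) (by
      rw [div_le_one hs0]; linarith)
    (fun j => ((w j)^2) ^ (s/2)) (fun j => ((v j)^2) ^ (s/2))
    (fun j => Real.rpow_nonneg (sq_nonneg _) _) (fun j => Real.rpow_nonneg (sq_nonneg _) _)
  have e1 : ∀ j, (((w j)^2) ^ (s/2)) ^ ((s-2)/s) = ((w j)^2) ^ ((s-2)/2) := by
    intro j
    rw [← Real.rpow_mul (sq_nonneg _)]
    congr 1
    field_simp
    try ring
  have e2 : ∀ j, (((v j)^2) ^ (s/2)) ^ (1 - (s-2)/s) = (v j)^2 := by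
    intro j
    rw [← Real.rpow_mul (sq_nonneg _)]
    have : s/2 * (1 - (s-2)/s) = 1 := by field_simp; try ring
    rw [this, Real.rpow_one]
  simp only [e1, e2] at key
  apply key.trans
  have hsum_nonneg : (0:ℝ) ≤ ∑ j, ((w j)^2) ^ (s/2) :=
    Finset.sum_nonneg fun j _ => Real.rpow_nonneg (sq_nonneg _) _
  have hle : (∑ j, ((w j)^2) ^ (s/2)) ≤ myG s ε w := by
    unfold myG
    have : (0:ℝ) ≤ ε ^ s := Real.rpow_nonneg hε.le s
    linarith
  have h1 : (∑ j, ((w j)^2) ^ (s/2)) ^ ((s-2)/s) ≤ (myG s ε w) ^ ((s-2)/s) :=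
    Real.rpow_le_rpow hsum_nonneg hle (div_nonneg (by linarith) (by linarith))
  have h2 : (∑ j, ((v j)^2) ^ (s/2)) ^ (1 - (s-2)/s) = (myK s v)^2 := by
    unfold myK
    rw [← Real.rpow_natCast ((∑ j, ((v j)^2) ^ (s/2)) ^ (1/s)) 2,
      ← Real.rpow_mul (Finset.sum_nonneg fun j _ => Real.rpow_nonneg (sq_nonneg _) _)]
    congr 1
    field_simp
    try ring
  rw [h2]
  apply mul_le_mul_of_nonneg_right h1 (by positivity)

-- helper : (w^2)^((s-2)/2) * |w| = (w^2)^((s-1)/2)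
lemma my_abs_helper (hs : 2 ≤ s) (w : ℝ) :
    ((w^2) ^ ((s-2)/2)) * |w| = (w^2) ^ ((s-1)/2) := by
  rcases eq_or_ne w 0 with rfl | hw
  · rcases eq_or_lt_of_le hs with rfl | hs2
    · norm_num
    · rw [abs_zero, mul_zero, zero_pow (two_ne_zero), Real.zero_rpow (ne_of_gt (by linarith))]
  · have hw2 : (0:ℝ) < w^2 := by positivity
    have habs : |w| = (w^2) ^ (1/2 : ℝ) := by
      rw [← Real.sqrt_eq_rpow, Real.sqrt_sq_eq_abs]
    rw [habs, ← Real.rpow_add hw2]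
    congr 1
    ring

-- Hölder bound (b)
lemma myG1_abs_bound (hs : 2 ≤ s) (hε : 0 < ε) (w v : Fin d → ℝ) :
    |∑ j, ((w j)^2) ^ ((s-2)/2) * (w j) * v j| ≤ (myG s ε w) ^ ((s-1)/s) * myK s v := by
  have hs0 : (0:ℝ) < s := by linarith
  have step1 : |∑ j, ((w j)^2) ^ ((s-2)/2) * (w j) * v j|
      ≤ ∑ j, ((w j)^2) ^ ((s-1)/2) * |v j| := by
    refine (Finset.abs_sum_le_sum_abs _ _).trans ?_
    apply Finset.sum_le_sum
    intro j _
    have habs : |((w j)^2) ^ ((s-2)/2) * (w j) * v j|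
        = ((w j)^2) ^ ((s-2)/2) * |w j| * |v j| := by
      rw [abs_mul, abs_mul, abs_of_nonneg (Real.rpow_nonneg (sq_nonneg _) _)]
    rw [habs, my_abs_helper hs]
  apply step1.trans
  have key := my_holder_sum (θ := (s-1)/s) (div_nonneg (by linarith) (by linarith)) (by
      rw [div_le_one hs0]; linarith)
    (fun j => ((w j)^2) ^ (s/2)) (fun j => ((v j)^2) ^ (s/2))
    (fun j => Real.rpow_nonneg (sq_nonneg _) _) (fun j => Real.rpow_nonneg (sq_nonneg _) _)
  have e1 : ∀ j, (((w j)^2) ^ (s/2)) ^ ((s-1)/s) = ((w j)^2) ^ ((s-1)/2) := by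
    intro j
    rw [← Real.rpow_mul (sq_nonneg _)]
    congr 1
    field_simp
  have e2 : ∀ j, (((v j)^2) ^ (s/2)) ^ (1 - (s-1)/s) = |v j| := by
    intro j
    rw [← Real.rpow_mul (sq_nonneg _)]
    have h : s/2 * (1 - (s-1)/s) = 1/2 := by field_simp; try ring
    rw [h, ← Real.sqrt_eq_rpow, Real.sqrt_sq_eq_abs]
  simp only [e1, e2] at key
  apply key.trans
  have hsum_nonneg : (0:ℝ) ≤ ∑ j, ((w j)^2) ^ (s/2) :=
    Finset.sum_nonneg fun j _ => Real.rpow_nonneg (sq_nonneg _) _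
  have hle : (∑ j, ((w j)^2) ^ (s/2)) ≤ myG s ε w := by
    unfold myG
    have : (0:ℝ) ≤ ε ^ s := Real.rpow_nonneg hε.le s
    linarith
  have h1 : (∑ j, ((w j)^2) ^ (s/2)) ^ ((s-1)/s) ≤ (myG s ε w) ^ ((s-1)/s) :=
    Real.rpow_le_rpow hsum_nonneg hle (div_nonneg (by linarith) (by linarith))
  have h2 : (∑ j, ((v j)^2) ^ (s/2)) ^ (1 - (s-1)/s) = myK s v := by
    unfold myK
    congr 1
    field_simp
    ring
  rw [h2]
  exact mul_le_mul_of_nonneg_right h1 (myK_nonneg s v)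

-- Minkowski / triangle bound (c)
lemma myG_triangle (hs : 2 ≤ s) (hε : 0 < ε) (y v : Fin d → ℝ) (c : ℝ) :
    (myG s ε (fun j => y j + c * v j)) ^ (1/s)
      ≤ (myG s ε y) ^ (1/s) + |c| * myK s v := by
  have hs0 : (0:ℝ) < s := by linarith
  have hs1 : (1:ℝ) ≤ s := by linarith
  set f : Option (Fin d) → ℝ := fun o => o.elim ε y
  set g : Option (Fin d) → ℝ := fun o => o.elim 0 (fun j => c * v j)
  have habs : ∀ x : ℝ, ((x^2) ^ (s/2)) = |x| ^ s := by
    intro x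
    rw [my_sq_rpow]
    congr 1; ring
  have hmink := Real.Lp_add_le (Finset.univ : Finset (Option (Fin d))) f g hs1
  have hL : (∑ o : Option (Fin d), |f o + g o| ^ s) = myG s ε (fun j => y j + c * v j) := by
    rw [Fintype.sum_option]
    unfold myG
    simp only [f, g, Option.elim]
    rw [add_zero, abs_of_pos hε, add_comm]
    congr 1
    apply Finset.sum_congr rfl
    intro j _
    rw [habs]
  have hR1 : (∑ o : Option (Fin d), |f o| ^ s) = myG s ε y := by
    rw [Fintype.sum_option]
    unfold myG
    simp only [f, Option.elim]
    rw [abs_of_pos hε, add_comm]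
    congr 1
    apply Finset.sum_congr rfl
    intro j _
    rw [habs]
  have hR2 : (∑ o : Option (Fin d), |g o| ^ s) ^ (1/s) = |c| * myK s v := by
    rw [Fintype.sum_option]
    simp only [g, Option.elim]
    have h0 : |(0:ℝ)| ^ s = 0 := by
      rw [abs_zero, Real.zero_rpow (ne_of_gt hs0)]
    rw [h0, zero_add]
    have : ∀ j, |c * v j| ^ s = |c| ^ s * |v j| ^ s := by
      intro j
      rw [abs_mul, Real.mul_rpow (abs_nonneg _) (abs_nonneg _)]
    rw [Finset.sum_congr rfl (fun j _ => this j), ← Finset.mul_sum]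
    rw [Real.mul_rpow (Real.rpow_nonneg (abs_nonneg _) _)
      (Finset.sum_nonneg fun j _ => Real.rpow_nonneg (abs_nonneg _) _)]
    congr 1
    · rw [← Real.rpow_mul (abs_nonneg c), mul_one_div, div_self (ne_of_gt hs0), Real.rpow_one]
    · unfold myK
      congr 1
      apply Finset.sum_congr rfl
      intro j _
      rw [habs]
  rw [hL, hR1] at hmink
  rw [← hR2]
  exact hmink
end Det

section Psi

noncomputable def myGt {d : ℕ} (s ε : ℝ) (y v : Fin d → ℝ) (t : ℝ) : ℝ :=
  myG s ε (fun j => y j + t * v j)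

noncomputable def myG1 {d : ℕ} (s : ℝ) (y v : Fin d → ℝ) (t : ℝ) : ℝ :=
  s * ∑ j, ((y j + t * v j)^2) ^ ((s-2)/2) * (y j + t * v j) * v j

noncomputable def myG2 {d : ℕ} (s : ℝ) (y v : Fin d → ℝ) (t : ℝ) : ℝ :=
  s * (s-1) * ∑ j, ((y j + t * v j)^2) ^ ((s-2)/2) * (v j)^2

noncomputable def myPsi {d : ℕ} (s q ε : ℝ) (y v : Fin d → ℝ) (t : ℝ) : ℝ :=
  (myGt s ε y v t) ^ (q/s)

noncomputable def myPsi1 {d : ℕ} (s q ε : ℝ) (y v : Fin d → ℝ) (t : ℝ) : ℝ :=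
  (q/s) * ((myGt s ε y v t) ^ ((q-s)/s) * myG1 s y v t)

noncomputable def myPsi2 {d : ℕ} (s q ε : ℝ) (y v : Fin d → ℝ) (t : ℝ) : ℝ :=
  (q/s) * (((q-s)/s * (myGt s ε y v t) ^ ((q-2*s)/s) * myG1 s y v t) * myG1 s y v t
    + (myGt s ε y v t) ^ ((q-s)/s) * myG2 s y v t)

variable {d : ℕ} {s q ε : ℝ}

lemma myGt_pos (hs : 2 ≤ s) (hε : 0 < ε) (y v : Fin d → ℝ) (t : ℝ) :
    0 < myGt s ε y v t := myG_pos hs hε _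

lemma myPsi_hasDeriv (hs : 2 ≤ s) (hε : 0 < ε) (y v : Fin d → ℝ) (t : ℝ) :
    HasDerivAt (myPsi s q ε y v) (myPsi1 s q ε y v t) t := by
  have hs0 : s ≠ 0 := by intro h; rw [h] at hs; norm_num at hs
  have hG := myG_hasDeriv (ε := ε) hs y v
  have h := (hG t).rpow_const (p := q/s) (Or.inl (ne_of_gt (myGt_pos hs hε y v t)))
  unfold myPsi myPsi1 myGt myG1
  convert h using 1
  have : q/s - 1 = (q-s)/s := by field_simp
  rw [← this]
  ring

lemma myPsi1_hasDeriv (hs : 2 ≤ s) (hε : 0 < ε) (y v : Fin d → ℝ) (t : ℝ) :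
    HasDerivAt (myPsi1 s q ε y v) (myPsi2 s q ε y v t) t := by
  have hs0 : s ≠ 0 := by intro h; rw [h] at hs; norm_num at hs
  have hG := myG_hasDeriv (ε := ε) hs y v
  have hG1 := myG1_hasDeriv (s := s) hs y v
  have hrpow := (hG t).rpow_const (p := (q-s)/s) (Or.inl (ne_of_gt (myGt_pos hs hε y v t)))
  have hprod := hrpow.mul (hG1 t)
  have h := hprod.const_mul (q/s)
  unfold myPsi1 myPsi2 myGt myG1 myG2
  refine h.congr_deriv ?_
  rw [show (q-2*s)/s = (q-s)/s - 1 by field_simp; try ring]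
  ring

lemma myPsi2_le (hs : 2 ≤ s) (hq : 2 ≤ q) (hqs : q ≤ s) (hε : 0 < ε)
    (y v : Fin d → ℝ) (t : ℝ) :
    myPsi2 s q ε y v t ≤ q * (s-1) * (myGt s ε y v t) ^ ((q-2)/s) * (myK s v)^2 := by
  have hs0 : (0:ℝ) < s := by linarith
  have hGpos := myGt_pos hs hε y v t
  set Gt := myGt s ε y v t with hGt
  set G1 := myG1 s y v t with hG1
  have hT1 : ((q-s)/s * Gt ^ ((q-2*s)/s) * G1) * G1 ≤ 0 := by
    have hc : (q-s)/s ≤ 0 := div_nonpos_of_nonpos_of_nonneg (by linarith) hs0.le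
    have hX : 0 ≤ Gt ^ ((q-2*s)/s) * (G1 * G1) :=
      mul_nonneg (Real.rpow_nonneg hGpos.le _) (mul_self_nonneg G1)
    calc ((q-s)/s * Gt ^ ((q-2*s)/s) * G1) * G1
        = (q-s)/s * (Gt ^ ((q-2*s)/s) * (G1 * G1)) := by ring
      _ ≤ 0 := mul_nonpos_of_nonpos_of_nonneg hc hX
  have hG2 : myG2 s y v t ≤ s * (s-1) * (Gt ^ ((s-2)/s) * (myK s v)^2) := by
    unfold myG2
    have := myG2_bound hs hε (fun j => y j + t * v j) v
    have hfac : (0:ℝ) ≤ s * (s-1) := by nlinarith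
    calc s * (s-1) * ∑ j, ((y j + t * v j)^2) ^ ((s-2)/2) * (v j)^2
        ≤ s * (s-1) * ((myG s ε fun j => y j + t * v j) ^ ((s-2)/s) * (myK s v)^2) :=
          mul_le_mul_of_nonneg_left this hfac
      _ = s * (s-1) * (Gt ^ ((s-2)/s) * (myK s v)^2) := by rw [hGt]; rfl
  have hT2 : Gt ^ ((q-s)/s) * myG2 s y v t
      ≤ s * (s-1) * (Gt ^ ((q-2)/s) * (myK s v)^2) := by
    have h1 : Gt ^ ((q-s)/s) * myG2 s y v t
        ≤ Gt ^ ((q-s)/s) * (s * (s-1) * (Gt ^ ((s-2)/s) * (myK s v)^2)) :=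
      mul_le_mul_of_nonneg_left hG2 (Real.rpow_nonneg hGpos.le _)
    apply h1.trans_eq
    rw [show Gt ^ ((q-s)/s) * (s * (s-1) * (Gt ^ ((s-2)/s) * (myK s v)^2))
        = s * (s-1) * ((Gt ^ ((q-s)/s) * Gt ^ ((s-2)/s)) * (myK s v)^2) by ring]
    rw [← Real.rpow_add hGpos]
    congr 3
    field_simp; try ring
  unfold myPsi2
  rw [← hGt, ← hG1]
  have hqso : 0 ≤ q / s := by positivity
  calc (q/s) * (((q-s)/s * Gt ^ ((q-2*s)/s) * G1) * G1 + Gt ^ ((q-s)/s) * myG2 s y v t)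
      ≤ (q/s) * (0 + s * (s-1) * (Gt ^ ((q-2)/s) * (myK s v)^2)) := by
        apply mul_le_mul_of_nonneg_left _ hqso
        exact add_le_add hT1 hT2
    _ = q * (s-1) * Gt ^ ((q-2)/s) * (myK s v)^2 := by
        field_simp
        ring

lemma myPsi1_abs_le (hs : 2 ≤ s) (hq : 2 ≤ q) (hqs : q ≤ s) (hε : 0 < ε)
    (y v : Fin d → ℝ) (t : ℝ) :
    |myPsi1 s q ε y v t| ≤ q * (myGt s ε y v t) ^ ((q-1)/s) * myK s v := by
  have hs0 : (0:ℝ) < s := by linarith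
  have hGpos := myGt_pos hs hε y v t
  have hG1abs : |myG1 s y v t| ≤ s * ((myGt s ε y v t) ^ ((s-1)/s) * myK s v) := by
    unfold myG1
    rw [abs_mul, abs_of_pos hs0]
    apply mul_le_mul_of_nonneg_left _ hs0.le
    exact myG1_abs_bound hs hε (fun j => y j + t * v j) v
  unfold myPsi1
  rw [abs_mul, abs_mul, abs_of_nonneg (by positivity : (0:ℝ) ≤ q/s),
    abs_of_nonneg (Real.rpow_nonneg hGpos.le _)]
  calc q/s * ((myGt s ε y v t) ^ ((q-s)/s) * |myG1 s y v t|)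
      ≤ q/s * ((myGt s ε y v t) ^ ((q-s)/s) * (s * ((myGt s ε y v t) ^ ((s-1)/s) * myK s v))) := by
        apply mul_le_mul_of_nonneg_left _ (by positivity)
        exact mul_le_mul_of_nonneg_left hG1abs (Real.rpow_nonneg hGpos.le _)
    _ = q * (((myGt s ε y v t) ^ ((q-s)/s) * (myGt s ε y v t) ^ ((s-1)/s)) * myK s v) := by
        field_simp; try ring
    _ = q * (myGt s ε y v t) ^ ((q-1)/s) * myK s v := by
        rw [← Real.rpow_add hGpos]
        rw [show (q-s)/s + (s-1)/s = (q-1)/s by field_simp; try ring]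
        ring

lemma myPsi2_abs_le (hs : 2 ≤ s) (hq : 2 ≤ q) (hqs : q ≤ s) (hε : 0 < ε)
    (y v : Fin d → ℝ) (t : ℝ) :
    |myPsi2 s q ε y v t| ≤ 2 * q * s * (myGt s ε y v t) ^ ((q-2)/s) * (myK s v)^2 := by
  have hs0 : (0:ℝ) < s := by linarith
  have hGpos := myGt_pos hs hε y v t
  set Gt := myGt s ε y v t with hGt
  have hG1abs : |myG1 s y v t| ≤ s * (Gt ^ ((s-1)/s) * myK s v) := by
    unfold myG1
    rw [abs_mul, abs_of_pos hs0]
    apply mul_le_mul_of_nonneg_left _ hs0.le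
    exact myG1_abs_bound hs hε (fun j => y j + t * v j) v
  have hG2abs : |myG2 s y v t| ≤ s * (s-1) * (Gt ^ ((s-2)/s) * (myK s v)^2) := by
    have hnn : 0 ≤ myG2 s y v t := by
      unfold myG2
      apply mul_nonneg (by nlinarith)
      exact Finset.sum_nonneg fun j _ =>
        mul_nonneg (Real.rpow_nonneg (sq_nonneg _) _) (sq_nonneg _)
    rw [abs_of_nonneg hnn]
    unfold myG2
    have := myG2_bound hs hε (fun j => y j + t * v j) v
    calc s * (s-1) * ∑ j, ((y j + t * v j)^2) ^ ((s-2)/2) * (v j)^2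
        ≤ s * (s-1) * ((myG s ε fun j => y j + t * v j) ^ ((s-2)/s) * (myK s v)^2) :=
          mul_le_mul_of_nonneg_left this (by nlinarith)
      _ = s * (s-1) * (Gt ^ ((s-2)/s) * (myK s v)^2) := by rw [hGt]; rfl
  have hT1 : |((q-s)/s * Gt ^ ((q-2*s)/s) * myG1 s y v t) * myG1 s y v t|
      ≤ (s-q)/s * s^2 * (Gt ^ ((q-2)/s) * (myK s v)^2) := by
    rw [abs_mul, abs_mul, abs_mul]
    rw [abs_of_nonneg (Real.rpow_nonneg hGpos.le ((q-2*s)/s))]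
    rw [abs_of_nonpos (div_nonpos_of_nonpos_of_nonneg (by linarith : q - s ≤ 0) hs0.le)]
    have hK := myK_nonneg s v
    have h1 : -((q-s)/s) * Gt ^ ((q-2*s)/s) * |myG1 s y v t| * |myG1 s y v t|
        ≤ -((q-s)/s) * Gt ^ ((q-2*s)/s) *
          (s * (Gt ^ ((s-1)/s) * myK s v)) * (s * (Gt ^ ((s-1)/s) * myK s v)) := by
      have hfac : (0:ℝ) ≤ -((q-s)/s) * Gt ^ ((q-2*s)/s) := by
        apply mul_nonneg _ (Real.rpow_nonneg hGpos.le _)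
        simp only [neg_nonneg]
        exact div_nonpos_of_nonpos_of_nonneg (by linarith) hs0.le
      have habs1 : (0:ℝ) ≤ |myG1 s y v t| := abs_nonneg _
      have hb : (0:ℝ) ≤ s * (Gt ^ ((s-1)/s) * myK s v) := by
        apply mul_nonneg hs0.le
        exact mul_nonneg (Real.rpow_nonneg hGpos.le _) hK
      calc -((q-s)/s) * Gt ^ ((q-2*s)/s) * |myG1 s y v t| * |myG1 s y v t|
          = (-((q-s)/s) * Gt ^ ((q-2*s)/s)) * (|myG1 s y v t| * |myG1 s y v t|) := by ring
        _ ≤ (-((q-s)/s) * Gt ^ ((q-2*s)/s)) *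
            ((s * (Gt ^ ((s-1)/s) * myK s v)) * (s * (Gt ^ ((s-1)/s) * myK s v))) := by
            apply mul_le_mul_of_nonneg_left _ hfac
            exact mul_le_mul hG1abs hG1abs habs1 hb
        _ = -((q-s)/s) * Gt ^ ((q-2*s)/s) *
            (s * (Gt ^ ((s-1)/s) * myK s v)) * (s * (Gt ^ ((s-1)/s) * myK s v)) := by ring
    apply h1.trans_eq
    rw [show -((q-s)/s) * Gt ^ ((q-2*s)/s) * (s * (Gt ^ ((s-1)/s) * myK s v))
          * (s * (Gt ^ ((s-1)/s) * myK s v))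
        = (s-q)/s * s^2 * ((Gt ^ ((q-2*s)/s) * (Gt ^ ((s-1)/s) * Gt ^ ((s-1)/s)))
          * (myK s v)^2) by ring]
    rw [← Real.rpow_add hGpos, ← Real.rpow_add hGpos]
    congr 2
    rw [show (q-2*s)/s + ((s-1)/s + (s-1)/s) = (q-2)/s by field_simp; try ring]
  have hT2 : |Gt ^ ((q-s)/s) * myG2 s y v t|
      ≤ s * (s-1) * (Gt ^ ((q-2)/s) * (myK s v)^2) := by
    rw [abs_mul, abs_of_nonneg (Real.rpow_nonneg hGpos.le _)]
    have h1 : Gt ^ ((q-s)/s) * |myG2 s y v t|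
        ≤ Gt ^ ((q-s)/s) * (s * (s-1) * (Gt ^ ((s-2)/s) * (myK s v)^2)) :=
      mul_le_mul_of_nonneg_left hG2abs (Real.rpow_nonneg hGpos.le _)
    apply h1.trans_eq
    rw [show Gt ^ ((q-s)/s) * (s * (s-1) * (Gt ^ ((s-2)/s) * (myK s v)^2))
        = s * (s-1) * ((Gt ^ ((q-s)/s) * Gt ^ ((s-2)/s)) * (myK s v)^2) by ring]
    rw [← Real.rpow_add hGpos]
    rw [show (q-s)/s + (s-2)/s = (q-2)/s by field_simp; try ring]
  unfold myPsi2
  rw [← hGt]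
  rw [abs_mul, abs_of_nonneg (by positivity : (0:ℝ) ≤ q/s)]
  calc q/s * |((q-s)/s * Gt ^ ((q-2*s)/s) * myG1 s y v t) * myG1 s y v t
        + Gt ^ ((q-s)/s) * myG2 s y v t|
      ≤ q/s * ((s-q)/s * s^2 * (Gt ^ ((q-2)/s) * (myK s v)^2)
          + s * (s-1) * (Gt ^ ((q-2)/s) * (myK s v)^2)) := by
        apply mul_le_mul_of_nonneg_left _ (by positivity)
        exact (abs_add_le _ _).trans (add_le_add hT1 hT2)
    _ ≤ 2 * q * s * Gt ^ ((q-2)/s) * (myK s v)^2 := by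
        have hfac : q/s * ((s-q)/s * s^2 + s * (s-1)) ≤ 2 * q * s := by
          rw [div_mul_eq_mul_div, div_le_iff₀ hs0]
          have h1 : (s-q)/s * s^2 = (s-q) * s := by field_simp; try ring
          rw [h1]
          have hq0 : (0:ℝ) ≤ q := by linarith
          nlinarith [mul_nonneg (mul_nonneg hq0 hq0) hs0.le, mul_nonneg hq0 hs0.le]
        have hGK : (0:ℝ) ≤ Gt ^ ((q-2)/s) * (myK s v)^2 :=
          mul_nonneg (Real.rpow_nonneg hGpos.le _) (sq_nonneg _)
        calc q/s * ((s-q)/s * s^2 * (Gt ^ ((q-2)/s) * (myK s v)^2)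
              + s * (s-1) * (Gt ^ ((q-2)/s) * (myK s v)^2))
            = (q/s * ((s-q)/s * s^2 + s * (s-1))) * (Gt ^ ((q-2)/s) * (myK s v)^2) := by ring
          _ ≤ (2*q*s) * (Gt ^ ((q-2)/s) * (myK s v)^2) :=
              mul_le_mul_of_nonneg_right hfac hGK
          _ = 2 * q * s * Gt ^ ((q-2)/s) * (myK s v)^2 := by ring

end Psi

section Dom

variable {d : ℕ} {s q ε : ℝ}

lemma my_max_rpow_le {a b p : ℝ} (ha : 0 ≤ a) (hb : 0 ≤ b) (hp : 0 ≤ p) :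
    (max a b) ^ p ≤ a ^ p + b ^ p := by
  rcases max_cases a b with ⟨h1, _⟩ | ⟨h1, _⟩ <;> rw [h1]
  · have : (0:ℝ) ≤ b ^ p := Real.rpow_nonneg hb p
    linarith
  · have : (0:ℝ) ≤ a ^ p := Real.rpow_nonneg ha p
    linarith

lemma my_add_rpow_le {a b p : ℝ} (ha : 0 ≤ a) (hb : 0 ≤ b) (hp : 1 ≤ p) :
    (a + b) ^ p ≤ 2 ^ p * (a ^ p + b ^ p) := by
  have h1 : a + b ≤ 2 * max a b := by
    rcases max_cases a b with ⟨h, h'⟩ | ⟨h, h'⟩ <;> rw [h] <;> linarith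
  have h2 : (a + b) ^ p ≤ (2 * max a b) ^ p :=
    Real.rpow_le_rpow (by linarith) h1 (by linarith)
  have h3 : ((2:ℝ) * max a b) ^ p = 2 ^ p * (max a b) ^ p :=
    Real.mul_rpow (by norm_num) (le_max_iff.2 (Or.inl ha))
  rw [h3] at h2
  apply h2.trans
  apply mul_le_mul_of_nonneg_left (my_max_rpow_le ha hb (by linarith))
  exact Real.rpow_nonneg (by norm_num) p

-- uniform bound on (myGt)^(α/s) for |t| ≤ 2
lemma myGt_rpow_le (hs : 2 ≤ s) (hε : 0 < ε) (y v : Fin d → ℝ) {t α : ℝ}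
    (ht : |t| ≤ 2) (hα : 0 ≤ α) :
    (myGt s ε y v t) ^ (α/s) ≤ ((myG s ε y) ^ (1/s) + 2 * myK s v) ^ α := by
  have hGt := myGt_pos hs hε y v t
  have hK := myK_nonneg s v
  have hNe : (0:ℝ) < (myG s ε y) ^ (1/s) := Real.rpow_pos_of_pos (myG_pos hs hε y) _
  have htri : (myGt s ε y v t) ^ (1/s) ≤ (myG s ε y) ^ (1/s) + 2 * myK s v := by
    refine (myG_triangle hs hε y v t).trans ?_
    have : |t| * myK s v ≤ 2 * myK s v := mul_le_mul_of_nonneg_right ht hK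
    linarith
  have heq : (myGt s ε y v t) ^ (α/s) = ((myGt s ε y v t) ^ (1/s)) ^ α := by
    rw [← Real.rpow_mul hGt.le]
    congr 1
    field_simp
  rw [heq]
  exact Real.rpow_le_rpow (Real.rpow_nonneg hGt.le _) htri hα

lemma myW_pos (hs : 2 ≤ s) (hε : 0 < ε) (y v : Fin d → ℝ) :
    0 < (myG s ε y) ^ (1/s) + 2 * myK s v := by
  have := Real.rpow_pos_of_pos (myG_pos hs hε y) (1/s)
  have := myK_nonneg s v
  linarith

lemma myK_le_W (hs : 2 ≤ s) (hε : 0 < ε) (y v : Fin d → ℝ) :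
    myK s v ≤ (myG s ε y) ^ (1/s) + 2 * myK s v := by
  have h1 := Real.rpow_pos_of_pos (myG_pos hs hε y) (1/s)
  have h2 := myK_nonneg s v
  linarith

lemma myPsi_dom (hs : 2 ≤ s) (hq : 2 ≤ q) (hqs : q ≤ s) (hε : 0 < ε)
    (y v : Fin d → ℝ) {t : ℝ} (ht : |t| ≤ 2) :
    |myPsi s q ε y v t| ≤ ((myG s ε y) ^ (1/s) + 2 * myK s v) ^ q := by
  unfold myPsi
  rw [abs_of_nonneg (Real.rpow_nonneg (myGt_pos hs hε y v t).le _)]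
  exact myGt_rpow_le hs hε y v ht (by linarith)

lemma myPsi1_dom (hs : 2 ≤ s) (hq : 2 ≤ q) (hqs : q ≤ s) (hε : 0 < ε)
    (y v : Fin d → ℝ) {t : ℝ} (ht : |t| ≤ 2) :
    |myPsi1 s q ε y v t| ≤ q * ((myG s ε y) ^ (1/s) + 2 * myK s v) ^ q := by
  set W := (myG s ε y) ^ (1/s) + 2 * myK s v with hW
  have hWpos := myW_pos hs hε y v
  have hKW := myK_le_W hs hε y v
  have hK := myK_nonneg s v
  refine (myPsi1_abs_le hs hq hqs hε y v t).trans ?_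
  have h1 : (myGt s ε y v t) ^ ((q-1)/s) ≤ W ^ (q-1) :=
    myGt_rpow_le hs hε y v ht (by linarith)
  have h2 : q * (myGt s ε y v t) ^ ((q-1)/s) * myK s v ≤ q * W ^ (q-1) * W := by
    apply mul_le_mul _ hKW hK _
    · exact mul_le_mul_of_nonneg_left h1 (by linarith)
    · positivity
  apply h2.trans_eq
  rw [mul_assoc, ← Real.rpow_add_one (ne_of_gt hWpos), sub_add_cancel]

lemma myPsi2_dom (hs : 2 ≤ s) (hq : 2 ≤ q) (hqs : q ≤ s) (hε : 0 < ε)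
    (y v : Fin d → ℝ) {t : ℝ} (ht : |t| ≤ 2) :
    |myPsi2 s q ε y v t| ≤ 2*q*s * ((myG s ε y) ^ (1/s) + 2 * myK s v) ^ q := by
  set W := (myG s ε y) ^ (1/s) + 2 * myK s v with hW
  have hWpos := myW_pos hs hε y v
  have hKW := myK_le_W hs hε y v
  have hK := myK_nonneg s v
  refine (myPsi2_abs_le hs hq hqs hε y v t).trans ?_
  have h1 : (myGt s ε y v t) ^ ((q-2)/s) ≤ W ^ (q-2) :=
    myGt_rpow_le hs hε y v ht (by linarith)
  have h2 : (myK s v)^2 ≤ W^2 := by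
    apply sq_le_sq' _ hKW
    linarith
  have hqs0 : (0:ℝ) ≤ 2*q*s := by positivity
  have h3 : 2*q*s * (myGt s ε y v t) ^ ((q-2)/s) * (myK s v)^2
      ≤ 2*q*s * W ^ (q-2) * W^2 := by
    apply mul_le_mul _ h2 (sq_nonneg _) _
    · exact mul_le_mul_of_nonneg_left h1 hqs0
    · positivity
  apply h3.trans_eq
  rw [mul_assoc, ← Real.rpow_natCast W 2, ← Real.rpow_add hWpos]
  congr 1
  push_cast
  rw [hW]
  ring

end Dom

section Step

variable {Ω : Type*} [MeasurableSpace Ω] {μ : Measure Ω} [IsProbabilityMeasure μ]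
variable {d : ℕ} {s q ε : ℝ}

lemma meas_myG {u : Ω → Fin d → ℝ} (hu : Measurable u) :
    Measurable (fun ω => myG s ε (u ω)) := by
  unfold myG; fun_prop

lemma meas_myK {v : Ω → Fin d → ℝ} (hv : Measurable v) :
    Measurable (fun ω => myK s (v ω)) := by
  unfold myK; fun_prop

lemma meas_myGt {u v : Ω → Fin d → ℝ} (hu : Measurable u) (hv : Measurable v) (t : ℝ) :
    Measurable (fun ω => myGt s ε (u ω) (v ω) t) := by
  unfold myGt myG; fun_prop

lemma meas_myPsi {u v : Ω → Fin d → ℝ} (hu : Measurable u) (hv : Measurable v) (t : ℝ) :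
    Measurable (fun ω => myPsi s q ε (u ω) (v ω) t) := by
  unfold myPsi myGt myG; fun_prop

lemma meas_myPsi1 {u v : Ω → Fin d → ℝ} (hu : Measurable u) (hv : Measurable v) (t : ℝ) :
    Measurable (fun ω => myPsi1 s q ε (u ω) (v ω) t) := by
  unfold myPsi1 myGt myG myG1; fun_prop

lemma meas_myPsi2 {u v : Ω → Fin d → ℝ} (hu : Measurable u) (hv : Measurable v) (t : ℝ) :
    Measurable (fun ω => myPsi2 s q ε (u ω) (v ω) t) := by
  unfold myPsi2 myGt myG myG1 myG2; fun_prop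

lemma int_myW_rpow (hs : 2 ≤ s) (hq : 2 ≤ q) (hε : 0 < ε)
    {u v : Ω → Fin d → ℝ} (hu : Measurable u) (hv : Measurable v)
    (hIu : Integrable (fun ω => myG s ε (u ω) ^ (q/s)) μ)
    (hIK : Integrable (fun ω => myK s (v ω) ^ q) μ) :
    Integrable (fun ω => ((myG s ε (u ω)) ^ (1/s) + 2 * myK s (v ω)) ^ q) μ := by
  have hmeas : Measurable (fun ω => ((myG s ε (u ω)) ^ (1/s) + 2 * myK s (v ω)) ^ q) := by
    unfold myG myK; fun_prop
  apply Integrable.mono' ((hIu.add (hIK.const_mul (2^q))).const_mul (2^q)) hmeas.aestronglyMeasurable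
  filter_upwards with ω
  have hG := myG_pos hs hε (u ω)
  have hK := myK_nonneg s (v ω)
  have h1 : (0:ℝ) ≤ (myG s ε (u ω)) ^ (1/s) := Real.rpow_nonneg hG.le _
  rw [Real.norm_eq_abs, abs_of_nonneg (Real.rpow_nonneg (by linarith) q)]
  have hmain := my_add_rpow_le h1 (by linarith : (0:ℝ) ≤ 2 * myK s (v ω)) (by linarith : 1 ≤ q)
  apply hmain.trans
  have e1 : ((myG s ε (u ω)) ^ (1/s)) ^ q = myG s ε (u ω) ^ (q/s) := by
    rw [← Real.rpow_mul hG.le]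
    congr 1
    field_simp
  have e2 : (2 * myK s (v ω)) ^ q = 2 ^ q * myK s (v ω) ^ q :=
    Real.mul_rpow (by norm_num) hK
  rw [e1, e2]
  simp only [Pi.add_apply]
  exact le_rfl

set_option maxHeartbeats 2000000 in
lemma my_step (hs : 2 ≤ s) (hq : 2 ≤ q) (hqs : q ≤ s) (hε : 0 < ε)
    {u v : Ω → Fin d → ℝ} (hu : Measurable u) (hv : Measurable v)
    (hind : IndepFun u v μ)
    (hvint : ∀ j, Integrable (fun ω => v ω j) μ)
    (hvmean : ∀ j, ∫ ω, v ω j ∂μ = 0)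
    (hIu : Integrable (fun ω => myG s ε (u ω) ^ (q/s)) μ)
    (hIK : Integrable (fun ω => myK s (v ω) ^ q) μ) :
    (∫ ω, myG s ε (fun j => u ω j + v ω j) ^ (q/s) ∂μ) ^ (2/q)
      ≤ (∫ ω, myG s ε (u ω) ^ (q/s) ∂μ) ^ (2/q)
        + (s-1) * (∫ ω, myK s (v ω) ^ q ∂μ) ^ (2/q) := by
  have hs0 : (0:ℝ) < s := by linarith
  have hq0 : (0:ℝ) < q := by linarith
  set W : Ω → ℝ := fun ω => (myG s ε (u ω)) ^ (1/s) + 2 * myK s (v ω) with hW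
  have hWq : Integrable (fun ω => W ω ^ q) μ := int_myW_rpow hs hq hε hu hv hIu hIK
  -- bounds valid for |t| ≤ 2
  have hball : ∀ t₀ : ℝ, |t₀| < 2 → ∀ t ∈ Metric.ball t₀ (2 - |t₀|), |t| ≤ 2 := by
    intro t₀ ht₀ t ht
    rw [Metric.mem_ball, Real.dist_eq] at ht
    have := abs_sub_abs_le_abs_sub t t₀
    linarith
  -- integrability of the three functions
  have hintψ : ∀ t : ℝ, |t| ≤ 2 → Integrable (fun ω => myPsi s q ε (u ω) (v ω) t) μ := by
    intro t ht
    apply Integrable.mono' hWq (meas_myPsi hu hv t).aestronglyMeasurable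
    filter_upwards with ω
    rw [Real.norm_eq_abs]
    exact myPsi_dom hs hq hqs hε (u ω) (v ω) ht
  have hintψ1 : ∀ t : ℝ, |t| ≤ 2 → Integrable (fun ω => myPsi1 s q ε (u ω) (v ω) t) μ := by
    intro t ht
    apply Integrable.mono' (hWq.const_mul q) (meas_myPsi1 hu hv t).aestronglyMeasurable
    filter_upwards with ω
    rw [Real.norm_eq_abs]
    exact myPsi1_dom hs hq hqs hε (u ω) (v ω) ht
  have hintψ2 : ∀ t : ℝ, |t| ≤ 2 → Integrable (fun ω => myPsi2 s q ε (u ω) (v ω) t) μ := by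
    intro t ht
    apply Integrable.mono' (hWq.const_mul (2*q*s)) (meas_myPsi2 hu hv t).aestronglyMeasurable
    filter_upwards with ω
    rw [Real.norm_eq_abs]
    exact myPsi2_dom hs hq hqs hε (u ω) (v ω) ht
  -- the integral functions
  set H : ℝ → ℝ := fun t => ∫ ω, myPsi s q ε (u ω) (v ω) t ∂μ with hH
  set H1 : ℝ → ℝ := fun t => ∫ ω, myPsi1 s q ε (u ω) (v ω) t ∂μ with hH1
  set H2 : ℝ → ℝ := fun t => ∫ ω, myPsi2 s q ε (u ω) (v ω) t ∂μ with hH2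
  -- first derivative
  have hder1 : ∀ t₀ : ℝ, |t₀| < 2 → HasDerivAt H (H1 t₀) t₀ := by
    intro t₀ ht₀
    have hδ : 0 < 2 - |t₀| := by linarith
    have := hasDerivAt_integral_of_dominated_loc_of_deriv_le (μ := μ)
      (F := fun t ω => myPsi s q ε (u ω) (v ω) t)
      (F' := fun t ω => myPsi1 s q ε (u ω) (v ω) t)
      (x₀ := t₀) (bound := fun ω => q * W ω ^ q) (Metric.ball_mem_nhds t₀ hδ)
      (Filter.Eventually.of_forall fun t => (meas_myPsi hu hv t).aestronglyMeasurable)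
      (hintψ t₀ (le_of_lt ht₀))
      (meas_myPsi1 hu hv t₀).aestronglyMeasurable
      (Filter.Eventually.of_forall fun ω => by
        intro t ht
        rw [Real.norm_eq_abs]
        exact myPsi1_dom hs hq hqs hε (u ω) (v ω) (hball t₀ ht₀ t ht))
      (hWq.const_mul q)
      (Filter.Eventually.of_forall fun ω => by
        intro t ht
        exact myPsi_hasDeriv hs hε (u ω) (v ω) t)
    exact this.2
  -- second derivative
  have hder2 : ∀ t₀ : ℝ, |t₀| < 2 → HasDerivAt H1 (H2 t₀) t₀ := by
    intro t₀ ht₀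
    have hδ : 0 < 2 - |t₀| := by linarith
    have := hasDerivAt_integral_of_dominated_loc_of_deriv_le (μ := μ)
      (F := fun t ω => myPsi1 s q ε (u ω) (v ω) t)
      (F' := fun t ω => myPsi2 s q ε (u ω) (v ω) t)
      (x₀ := t₀) (bound := fun ω => 2*q*s * W ω ^ q) (Metric.ball_mem_nhds t₀ hδ)
      (Filter.Eventually.of_forall fun t => (meas_myPsi1 hu hv t).aestronglyMeasurable)
      (hintψ1 t₀ (le_of_lt ht₀))
      (meas_myPsi2 hu hv t₀).aestronglyMeasurable
      (Filter.Eventually.of_forall fun ω => by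
        intro t ht
        rw [Real.norm_eq_abs]
        exact myPsi2_dom hs hq hqs hε (u ω) (v ω) (hball t₀ ht₀ t ht))
      (hWq.const_mul (2*q*s))
      (Filter.Eventually.of_forall fun ω => by
        intro t ht
        exact myPsi1_hasDeriv hs hε (u ω) (v ω) t)
    exact this.2
  -- positivity of H
  have hHpos : ∀ t : ℝ, |t| ≤ 2 → ε ^ q ≤ H t := by
    intro t ht
    have hεq : ∀ ω : Ω, ε ^ q ≤ myPsi s q ε (u ω) (v ω) t := by
      intro ω
      unfold myPsi
      have h1 : ε ^ s ≤ myGt s ε (u ω) (v ω) t := by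
        unfold myGt myG
        have : (0:ℝ) ≤ ∑ j, (((u ω j) + t * v ω j)^2) ^ (s/2) :=
          Finset.sum_nonneg fun j _ => Real.rpow_nonneg (sq_nonneg _) _
        linarith
      have h2 : (ε ^ s) ^ (q/s) ≤ (myGt s ε (u ω) (v ω) t) ^ (q/s) :=
        Real.rpow_le_rpow (Real.rpow_nonneg hε.le _) h1 (by positivity)
      have h3 : (ε ^ s) ^ (q/s) = ε ^ q := by
        rw [← Real.rpow_mul hε.le]
        congr 1
        field_simp
      linarith [h2, h3.symm.le]
    calc ε ^ q = ∫ _ω, ε ^ q ∂μ := by rw [integral_const]; simp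
      _ ≤ H t := integral_mono (integrable_const _) (hintψ t ht)
          (fun ω => hεq ω)
  have hH0 : ∀ t : ℝ, |t| ≤ 2 → 0 < H t := fun t ht =>
    lt_of_lt_of_le (Real.rpow_pos_of_pos hε q) (hHpos t ht)
  -- mean-zero : H1 0 = 0
  have hmean0 : H1 0 = 0 := by
    have hψ1eq : ∀ ω : Ω, myPsi1 s q ε (u ω) (v ω) 0
        = ∑ j, q * ((myG s ε (u ω)) ^ ((q-s)/s) * (((u ω j)^2) ^ ((s-2)/2) * (u ω j)) * v ω j) := by
      intro ω
      unfold myPsi1 myGt myG1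
      have he : (fun j => u ω j + 0 * v ω j) = u ω := by funext j; ring_nf
      rw [he]
      simp only [Finset.mul_sum]
      apply Finset.sum_congr rfl
      intro j _
      have he2 : u ω j + 0 * v ω j = u ω j := by ring
      rw [he2]
      field_simp
    have hΦmeas : ∀ j : Fin d, Measurable (fun w : Fin d → ℝ =>
        (myG s ε w) ^ ((q-s)/s) * (((w j)^2) ^ ((s-2)/2) * w j)) := by
      intro j
      unfold myG
      fun_prop
    have hΦint : ∀ j : Fin d, Integrable (fun ω =>
        (myG s ε (u ω)) ^ ((q-s)/s) * (((u ω j)^2) ^ ((s-2)/2) * u ω j)) μ := by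
      intro j
      apply Integrable.mono' (hIu.const_mul ε⁻¹)
        ((hΦmeas j).comp hu).aestronglyMeasurable
      filter_upwards with ω
      have hG := myG_pos hs hε (u ω)
      show |(myG s ε (u ω)) ^ ((q-s)/s) * (((u ω j)^2) ^ ((s-2)/2) * u ω j)|
        ≤ ε⁻¹ * (myG s ε (u ω) ^ (q/s))
      rw [abs_mul]
      rw [abs_of_nonneg (Real.rpow_nonneg hG.le _)]
      have habs : |((u ω j)^2) ^ ((s-2)/2) * u ω j| = ((u ω j)^2) ^ ((s-1)/2) := by
        rw [abs_mul, abs_of_nonneg (Real.rpow_nonneg (sq_nonneg _) _), my_abs_helper hs]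
      rw [habs]
      have hsingle : ((u ω j)^2) ^ (s/2) ≤ myG s ε (u ω) := by
        unfold myG
        have h1 : ((u ω j)^2) ^ (s/2) ≤ ∑ k, (((u ω k))^2) ^ (s/2) :=
          Finset.single_le_sum (f := fun k => (((u ω k))^2) ^ (s/2))
            (fun k _ => Real.rpow_nonneg (sq_nonneg _) _) (Finset.mem_univ j)
        have h2 : (0:ℝ) ≤ ε ^ s := Real.rpow_nonneg hε.le _
        linarith
      have hterm : ((u ω j)^2) ^ ((s-1)/2) ≤ (myG s ε (u ω)) ^ ((s-1)/s) := by
        have e : ((u ω j)^2) ^ ((s-1)/2) = (((u ω j)^2) ^ (s/2)) ^ ((s-1)/s) := by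
          rw [← Real.rpow_mul (sq_nonneg _)]
          congr 1
          field_simp; try ring
        rw [e]
        exact Real.rpow_le_rpow (Real.rpow_nonneg (sq_nonneg _) _) hsingle
          (div_nonneg (by linarith) hs0.le)
      calc (myG s ε (u ω)) ^ ((q-s)/s) * ((u ω j)^2) ^ ((s-1)/2)
          ≤ (myG s ε (u ω)) ^ ((q-s)/s) * (myG s ε (u ω)) ^ ((s-1)/s) :=
            mul_le_mul_of_nonneg_left hterm (Real.rpow_nonneg hG.le _)
        _ = (myG s ε (u ω)) ^ ((q-1)/s) := by
            rw [← Real.rpow_add hG]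
            congr 1
            field_simp; try ring
        _ = (myG s ε (u ω)) ^ (q/s) * (myG s ε (u ω)) ^ (-(1/s)) := by
            rw [← Real.rpow_add hG]
            congr 1
            field_simp; try ring
        _ ≤ (myG s ε (u ω)) ^ (q/s) * ε⁻¹ := by
            apply mul_le_mul_of_nonneg_left _ (Real.rpow_nonneg hG.le _)
            have h1 : ε ^ s ≤ myG s ε (u ω) := by
              unfold myG
              have : (0:ℝ) ≤ ∑ k, (((u ω k))^2) ^ (s/2) :=
                Finset.sum_nonneg fun k _ => Real.rpow_nonneg (sq_nonneg _) _
              linarith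
            have h2 : (myG s ε (u ω)) ^ (-(1/s)) ≤ (ε ^ s) ^ (-(1/s)) :=
              Real.rpow_le_rpow_of_nonpos (Real.rpow_pos_of_pos hε s) h1
                (neg_nonpos_of_nonneg (by positivity))
            have h3 : (ε ^ s) ^ (-(1/s)) = ε⁻¹ := by
              rw [← Real.rpow_mul hε.le]
              rw [show s * -(1/s) = -1 by field_simp]
              exact Real.rpow_neg_one ε
            linarith [h2, h3.le]
        _ = ε⁻¹ * (myG s ε (u ω)) ^ (q/s) := by ring
    have hprodint : ∀ j : Fin d, Integrable (fun ω =>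
        ((myG s ε (u ω)) ^ ((q-s)/s) * (((u ω j)^2) ^ ((s-2)/2) * u ω j)) * v ω j) μ := by
      intro j
      have hIF : IndepFun (fun ω => (myG s ε (u ω)) ^ ((q-s)/s)
          * (((u ω j)^2) ^ ((s-2)/2) * u ω j)) (fun ω => v ω j) μ :=
        hind.comp (hΦmeas j) (measurable_pi_apply j)
      exact hIF.integrable_mul (hΦint j) (hvint j)
    rw [hH1]
    simp only
    rw [integral_congr_ae (Filter.Eventually.of_forall hψ1eq)]
    rw [integral_finset_sum _ (fun j _ => ((hprodint j).const_mul q))]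
    apply Finset.sum_eq_zero
    intro j _
    rw [integral_const_mul]
    have hIF : IndepFun (fun ω => (myG s ε (u ω)) ^ ((q-s)/s)
        * (((u ω j)^2) ^ ((s-2)/2) * u ω j)) (fun ω => v ω j) μ :=
      hind.comp (hΦmeas j) (measurable_pi_apply j)
    have key : (∫ ω, (myG s ε (u ω)) ^ ((q-s)/s) * (((u ω j)^2) ^ ((s-2)/2) * u ω j) * v ω j ∂μ)
        = (∫ ω, (myG s ε (u ω)) ^ ((q-s)/s) * (((u ω j)^2) ^ ((s-2)/2) * u ω j) ∂μ)
          * ∫ ω, v ω j ∂μ :=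
      hIF.integral_fun_mul_eq_mul_integral (hΦint j).aestronglyMeasurable (hvint j).aestronglyMeasurable
    rw [key, hvmean j, mul_zero, mul_zero]
  -- Hölder bound on H2
  set Kq := ∫ ω, myK s (v ω) ^ q ∂μ with hKq
  have hKqnn : 0 ≤ Kq :=
    integral_nonneg (fun ω => Real.rpow_nonneg (myK_nonneg _ _) _)
  have hθ0 : 0 ≤ (q-2)/q := div_nonneg (by linarith) hq0.le
  have hθ1 : (q-2)/q ≤ 1 := by
    rw [div_le_one hq0]; linarith
  have hH2le : ∀ t : ℝ, |t| ≤ 2 → H2 t ≤ q*(s-1) * ((H t) ^ ((q-2)/q) * Kq ^ (1-(q-2)/q)) := by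
    intro t ht
    have hpt : ∀ ω, myPsi2 s q ε (u ω) (v ω) t
        ≤ q*(s-1) * ((myPsi s q ε (u ω) (v ω) t) ^ ((q-2)/q)
          * (myK s (v ω) ^ q) ^ (1-(q-2)/q)) := by
      intro ω
      have h1 := myPsi2_le hs hq hqs hε (u ω) (v ω) t
      have hGt := myGt_pos hs hε (u ω) (v ω) t
      have hK := myK_nonneg s (v ω)
      have e1 : (myPsi s q ε (u ω) (v ω) t) ^ ((q-2)/q)
          = (myGt s ε (u ω) (v ω) t) ^ ((q-2)/s) := by
        unfold myPsi
        rw [← Real.rpow_mul hGt.le]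
        congr 1
        field_simp
        try ring
      have e2 : (myK s (v ω) ^ q) ^ (1-(q-2)/q) = myK s (v ω) ^ 2 := by
        rw [← Real.rpow_mul hK]
        rw [show q * (1-(q-2)/q) = 2 by field_simp; try ring]
        exact Real.rpow_two _
      rw [e1, e2]
      apply h1.trans_eq
      ring
    have hmeasF : Measurable (fun ω => (myPsi s q ε (u ω) (v ω) t) ^ ((q-2)/q)
        * (myK s (v ω) ^ q) ^ (1-(q-2)/q)) := by
      unfold myPsi myGt myG myK
      fun_prop
    have hintF : Integrable (fun ω => (myPsi s q ε (u ω) (v ω) t) ^ ((q-2)/q)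
        * (myK s (v ω) ^ q) ^ (1-(q-2)/q)) μ := by
      apply Integrable.mono'
        (((hintψ t ht).const_mul ((q-2)/q)).add ((hIK.const_mul (1-(q-2)/q))))
        hmeasF.aestronglyMeasurable
      filter_upwards with ω
      rw [Real.norm_eq_abs]
      have hψnn : 0 ≤ myPsi s q ε (u ω) (v ω) t :=
        Real.rpow_nonneg (myGt_pos hs hε (u ω) (v ω) t).le _
      have hKnn : 0 ≤ myK s (v ω) ^ q := Real.rpow_nonneg (myK_nonneg _ _) _
      rw [abs_of_nonneg (mul_nonneg (Real.rpow_nonneg hψnn _) (Real.rpow_nonneg hKnn _))]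
      have := Real.geom_mean_le_arith_mean2_weighted (w₁ := (q-2)/q) (w₂ := 1-(q-2)/q)
        (p₁ := myPsi s q ε (u ω) (v ω) t) (p₂ := myK s (v ω) ^ q)
        hθ0 (by linarith) hψnn hKnn (by ring)
      simpa [Pi.add_apply] using this
    calc H2 t ≤ ∫ ω, q*(s-1) * ((myPsi s q ε (u ω) (v ω) t) ^ ((q-2)/q)
          * (myK s (v ω) ^ q) ^ (1-(q-2)/q)) ∂μ := by
          apply integral_mono (hintψ2 t ht) (hintF.const_mul _) hpt
      _ = q*(s-1) * ∫ ω, (myPsi s q ε (u ω) (v ω) t) ^ ((q-2)/q)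
          * (myK s (v ω) ^ q) ^ (1-(q-2)/q) ∂μ := integral_const_mul _ _
      _ ≤ q*(s-1) * ((H t) ^ ((q-2)/q) * Kq ^ (1-(q-2)/q)) := by
          apply mul_le_mul_of_nonneg_left _ (by nlinarith)
          exact my_holder_int μ hθ0 hθ1 _ _
            (fun ω => Real.rpow_nonneg (myGt_pos hs hε (u ω) (v ω) t).le _)
            (fun ω => Real.rpow_nonneg (myK_nonneg _ _) _)
            (hintψ t ht) hIK
  -- second derivative data for M
  set C := (s-1) * Kq ^ (1-(q-2)/q) with hC
  have hCnn : 0 ≤ C := mul_nonneg (by linarith) (Real.rpow_nonneg hKqnn _)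
  set M : ℝ → ℝ := fun t => (H t) ^ (2/q) - C * t^2 with hM
  set M1 : ℝ → ℝ := fun t => (2/q) * ((H t) ^ ((2-q)/q) * H1 t) - C * (2*t) with hM1
  set M2 : ℝ → ℝ := fun t => (2/q) * (((2-q)/q * (H t) ^ ((2-2*q)/q) * H1 t) * H1 t
    + (H t) ^ ((2-q)/q) * H2 t) - C * 2 with hM2
  have hMder : ∀ t : ℝ, |t| < 2 → HasDerivAt M (M1 t) t := by
    intro t ht
    have h1 : HasDerivAt (fun t => (H t) ^ (2/q)) ((2/q) * (H t) ^ (2/q - 1) * H1 t) t := by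
      have := (hder1 t ht).rpow_const (p := 2/q) (Or.inl (ne_of_gt (hH0 t ht.le)))
      convert this using 1
      ring
    have h2 : HasDerivAt (fun t : ℝ => C * t^2) (C * (2*t)) t := by
      simpa using (hasDerivAt_pow 2 t).const_mul C
    have heq : M1 t = (2/q) * (H t) ^ (2/q - 1) * H1 t - C * (2*t) := by
      rw [hM1]
      simp only
      rw [show (2-q)/q = 2/q - 1 by field_simp]
      ring
    rw [heq]
    exact h1.sub h2
  have hM1der : ∀ t : ℝ, |t| < 2 → HasDerivAt M1 (M2 t) t := by
    intro t ht
    have h1 : HasDerivAt (fun t => (H t) ^ ((2-q)/q))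
        (((2-q)/q) * (H t) ^ ((2-q)/q - 1) * H1 t) t := by
      have := (hder1 t ht).rpow_const (p := (2-q)/q) (Or.inl (ne_of_gt (hH0 t ht.le)))
      convert this using 1
      ring
    have h2 := h1.mul (hder2 t ht)
    have h3 := h2.const_mul (2/q)
    have h4 : HasDerivAt (fun t : ℝ => C * (2*t)) (C * 2) t := by
      have h5 : HasDerivAt (fun t : ℝ => t) 1 t := hasDerivAt_id t
      have h6 := (h5.const_mul (2:ℝ)).const_mul C
      simpa [mul_assoc] using h6
    have heq : M2 t = (2/q) * ((((2-q)/q) * (H t) ^ ((2-q)/q - 1) * H1 t) * H1 t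
          + (H t) ^ ((2-q)/q) * H2 t) - C * 2 := by
      rw [hM2]
      simp only
      rw [show (2-2*q)/q = (2-q)/q - 1 by field_simp; try ring]
    rw [heq]
    exact h3.sub h4
  have hM2le : ∀ t : ℝ, |t| < 2 → M2 t ≤ 0 := by
    intro t ht
    have hHt := hH0 t ht.le
    have hT1 : ((2-q)/q * (H t) ^ ((2-2*q)/q) * H1 t) * H1 t ≤ 0 := by
      have hc : (2-q)/q ≤ 0 := div_nonpos_of_nonpos_of_nonneg (by linarith) hq0.le
      have hX : 0 ≤ (H t) ^ ((2-2*q)/q) * (H1 t * H1 t) :=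
        mul_nonneg (Real.rpow_nonneg hHt.le _) (mul_self_nonneg _)
      calc ((2-q)/q * (H t) ^ ((2-2*q)/q) * H1 t) * H1 t
          = (2-q)/q * ((H t) ^ ((2-2*q)/q) * (H1 t * H1 t)) := by ring
        _ ≤ 0 := mul_nonpos_of_nonpos_of_nonneg hc hX
    have hT2 : (H t) ^ ((2-q)/q) * H2 t ≤ q*(s-1) * Kq ^ (1-(q-2)/q) := by
      have h1 : (H t) ^ ((2-q)/q) * H2 t
          ≤ (H t) ^ ((2-q)/q) * (q*(s-1) * ((H t) ^ ((q-2)/q) * Kq ^ (1-(q-2)/q))) :=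
        mul_le_mul_of_nonneg_left (hH2le t ht.le) (Real.rpow_nonneg hHt.le _)
      apply h1.trans_eq
      rw [show (H t) ^ ((2-q)/q) * (q*(s-1) * ((H t) ^ ((q-2)/q) * Kq ^ (1-(q-2)/q)))
          = q*(s-1) * (((H t) ^ ((2-q)/q) * (H t) ^ ((q-2)/q)) * Kq ^ (1-(q-2)/q)) by ring]
      rw [← Real.rpow_add hHt]
      rw [show (2-q)/q + (q-2)/q = 0 by field_simp; ring]
      rw [Real.rpow_zero, one_mul]
    rw [hM2]
    simp only
    have : (2/q) * (((2-q)/q * (H t) ^ ((2-2*q)/q) * H1 t) * H1 t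
        + (H t) ^ ((2-q)/q) * H2 t) ≤ (2/q) * (0 + q*(s-1) * Kq ^ (1-(q-2)/q)) := by
      apply mul_le_mul_of_nonneg_left _ (by positivity)
      exact add_le_add hT1 hT2
    have heq : (2/q) * (0 + q*(s-1) * Kq ^ (1-(q-2)/q)) = C * 2 := by
      rw [hC]
      field_simp
      ring
    linarith
  -- Mean value theorem, twice
  have habs01 : ∀ t : ℝ, t ∈ Set.Icc (0:ℝ) 1 → |t| < 2 := by
    intro t ht
    rw [abs_lt]
    constructor <;> [linarith [ht.1]; linarith [ht.2]]
  obtain ⟨c, hc, hceq⟩ := exists_hasDerivAt_eq_slope M M1 zero_lt_one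
    (fun t ht => ((hMder t (habs01 t ht)).continuousAt).continuousWithinAt)
    (fun t ht => hMder t (habs01 t (Set.mem_Icc_of_Ioo ht)))
  have hslope : M1 c = M 1 - M 0 := by
    rw [hceq]; norm_num
  have hc2 : |c| < 2 := habs01 c (Set.mem_Icc_of_Ioo hc)
  obtain ⟨c', hc', hceq'⟩ := exists_hasDerivAt_eq_slope M1 M2 hc.1
    (fun t ht => ((hM1der t (by
      rw [abs_lt]
      constructor <;> [linarith [ht.1]; linarith [ht.2, hc.2]])).continuousAt).continuousWithinAt)
    (fun t ht => hM1der t (by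
      rw [abs_lt]
      constructor <;> [linarith [ht.1]; linarith [ht.2, hc.2]]))
  have hM1c : M1 c ≤ M1 0 := by
    have h1 : M2 c' ≤ 0 := hM2le c' (by
      rw [abs_lt]
      constructor <;> [linarith [hc'.1]; linarith [hc'.2, hc.2]])
    have h2 : M1 c - M1 0 = M2 c' * c := by
      rw [hceq', sub_zero, div_mul_cancel₀ _ (ne_of_gt hc.1)]
    nlinarith [hc.1]
  have hM10 : M1 0 = 0 := by
    rw [hM1]
    simp only
    rw [hmean0]
    ring
  -- conclude M 1 ≤ M 0
  have hfinal : M 1 ≤ M 0 := by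
    have := hslope
    nlinarith [hM1c, hM10]
  -- translate
  have hH1eq : H 1 = ∫ ω, myG s ε (fun j => u ω j + v ω j) ^ (q/s) ∂μ := by
    rw [hH]
    apply integral_congr_ae
    filter_upwards with ω
    unfold myPsi myGt
    rw [show (fun j => u ω j + 1 * v ω j) = (fun j => u ω j + v ω j) by funext j; ring]
  have hH0eq : H 0 = ∫ ω, myG s ε (u ω) ^ (q/s) ∂μ := by
    rw [hH]
    apply integral_congr_ae
    filter_upwards with ω
    unfold myPsi myGt
    rw [show (fun j => u ω j + 0 * v ω j) = u ω by funext j; ring]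
  have hexp : 1 - (q-2)/q = 2/q := by field_simp; ring
  rw [hM] at hfinal
  simp only at hfinal
  rw [hH1eq, hH0eq, hC, hexp] at hfinal
  norm_num at hfinal
  linarith [hfinal]

end Step

section Induction

variable {Ω : Type*} [MeasurableSpace Ω] {μ : Measure Ω} [IsProbabilityMeasure μ]
variable {d : ℕ} {s q ε : ℝ}

lemma int_myG_add (hs : 2 ≤ s) (hq : 2 ≤ q) (hε : 0 < ε)
    {u v : Ω → Fin d → ℝ} (hu : Measurable u) (hv : Measurable v)
    (hIu : Integrable (fun ω => myG s ε (u ω) ^ (q/s)) μ)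
    (hIK : Integrable (fun ω => myK s (v ω) ^ q) μ) :
    Integrable (fun ω => myG s ε (fun j => u ω j + v ω j) ^ (q/s)) μ := by
  have hmeas : Measurable (fun ω => myG s ε (fun j => u ω j + v ω j) ^ (q/s)) := by
    unfold myG; fun_prop
  apply Integrable.mono' ((hIu.add (hIK.const_mul (2^q))).const_mul (2^q))
    hmeas.aestronglyMeasurable
  filter_upwards with ω
  have hG1 := myG_pos hs hε (fun j => u ω j + v ω j)
  have hG2 := myG_pos hs hε (u ω)
  have hK := myK_nonneg s (v ω)
  rw [Real.norm_eq_abs, abs_of_nonneg (Real.rpow_nonneg hG1.le _)]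
  have htri : (myG s ε (fun j => u ω j + v ω j)) ^ (1/s)
      ≤ (myG s ε (u ω)) ^ (1/s) + myK s (v ω) := by
    have := myG_triangle hs hε (u ω) (v ω) 1
    simp only [one_mul, abs_one] at this
    exact this
  have h1 : myG s ε (fun j => u ω j + v ω j) ^ (q/s)
      = ((myG s ε (fun j => u ω j + v ω j)) ^ (1/s)) ^ q := by
    rw [← Real.rpow_mul hG1.le]
    congr 1
    field_simp
  have h2 : ((myG s ε (fun j => u ω j + v ω j)) ^ (1/s)) ^ q
      ≤ ((myG s ε (u ω)) ^ (1/s) + myK s (v ω)) ^ q :=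
    Real.rpow_le_rpow (Real.rpow_nonneg hG1.le _) htri (by linarith)
  have h3 := my_add_rpow_le (Real.rpow_nonneg hG2.le (1/s)) hK (by linarith : (1:ℝ) ≤ q)
  have e1 : ((myG s ε (u ω)) ^ (1/s)) ^ q = myG s ε (u ω) ^ (q/s) := by
    rw [← Real.rpow_mul hG2.le]
    congr 1
    field_simp
  simp only [Pi.add_apply]
  have h2q : (0:ℝ) < 2^q := Real.rpow_pos_of_pos two_pos q
  have h2q1 : (1:ℝ) ≤ 2^q := by
    rw [show (1:ℝ) = (2:ℝ)^(0:ℝ) by simp]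
    exact Real.rpow_le_rpow_of_exponent_le (by norm_num) (by linarith)
  have hKq : (0:ℝ) ≤ myK s (v ω) ^ q := Real.rpow_nonneg hK q
  calc myG s ε (fun j => u ω j + v ω j) ^ (q/s)
      = ((myG s ε (fun j => u ω j + v ω j)) ^ (1/s)) ^ q := h1
    _ ≤ ((myG s ε (u ω)) ^ (1/s) + myK s (v ω)) ^ q := h2
    _ ≤ 2^q * (((myG s ε (u ω)) ^ (1/s)) ^ q + myK s (v ω) ^ q) := h3
    _ = 2^q * (myG s ε (u ω) ^ (q/s) + myK s (v ω) ^ q) := by rw [e1]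
    _ ≤ 2^q * (myG s ε (u ω) ^ (q/s) + 2^q * myK s (v ω) ^ q) := by
        nlinarith [mul_nonneg h2q.le hKq]

lemma my_induction {n : ℕ} (hs : 2 ≤ s) (hq : 2 ≤ q) (hqs : q ≤ s) (hε : 0 < ε)
    (x : Fin n → Ω → Fin d → ℝ) (hxm : ∀ i, Measurable (x i))
    (hindep : iIndepFun x μ)
    (hint : ∀ i j, Integrable (fun ω => x i ω j) μ)
    (hmean : ∀ i j, ∫ ω, x i ω j ∂μ = 0)
    (hIK : ∀ i, Integrable (fun ω => myK s (x i ω) ^ q) μ)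
    (T : Finset (Fin n)) :
    Integrable (fun ω => myG s ε ((∑ i ∈ T, x i) ω) ^ (q/s)) μ ∧
    (∫ ω, myG s ε ((∑ i ∈ T, x i) ω) ^ (q/s) ∂μ) ^ (2/q)
      ≤ ε^2 + (s-1) * ∑ i ∈ T, (∫ ω, myK s (x i ω) ^ q ∂μ) ^ (2/q) := by
  have hs0 : (0:ℝ) < s := by linarith
  have hq0 : (0:ℝ) < q := by linarith
  induction T using Finset.cons_induction with
  | empty =>
    have hzero : ∀ ω : Ω, myG s ε ((∑ i ∈ (∅ : Finset (Fin n)), x i) ω) ^ (q/s) = ε ^ q := by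
      intro ω
      rw [Finset.sum_empty]
      show myG s ε ((0 : Fin d → ℝ)) ^ (q/s) = ε ^ q
      unfold myG
      have hterm : ∀ j : Fin d, (((0 : Fin d → ℝ) j)^2) ^ (s/2) = 0 := by
        intro j
        simp only [Pi.zero_apply]
        rw [show ((0:ℝ)^2) = 0 by norm_num, Real.zero_rpow (by positivity : s/2 ≠ 0)]
      rw [Finset.sum_congr rfl (fun j _ => hterm j), Finset.sum_const_zero, zero_add,
        ← Real.rpow_mul hε.le]
      congr 1
      field_simp
    constructor
    · rw [show (fun ω => myG s ε ((∑ i ∈ (∅:Finset (Fin n)), x i) ω) ^ (q/s))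
          = (fun _ω : Ω => ε ^ q) from funext hzero]
      exact integrable_const _
    · rw [show (fun ω => myG s ε ((∑ i ∈ (∅:Finset (Fin n)), x i) ω) ^ (q/s))
          = (fun _ω : Ω => ε ^ q) from funext hzero]
      rw [integral_const]
      simp only [measure_univ, probReal_univ, ENNReal.toReal_one, smul_eq_mul, one_mul, Finset.sum_empty,
        mul_zero, add_zero]
      rw [← Real.rpow_mul hε.le]
      rw [show q * (2/q) = 2 by field_simp]
      rw [Real.rpow_two]
  | cons a T ha IH =>
    obtain ⟨IHint, IHle⟩ := IH
    have hu : Measurable (∑ i ∈ T, x i) := by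
      have hrw : (∑ i ∈ T, x i) = fun ω => ∑ i ∈ T, x i ω := by
        funext ω
        exact Finset.sum_apply ω T x
      rw [hrw]
      exact Finset.measurable_sum T (fun i _ => hxm i)
    have hindAB : IndepFun (∑ i ∈ T, x i) (x a) μ :=
      hindep.indepFun_finsetSum_of_notMem hxm ha
    have hstep := my_step hs hq hqs hε hu (hxm a) hindAB
      (fun j => hint a j) (fun j => hmean a j) IHint (hIK a)
    have hrepr : (fun ω => myG s ε ((∑ i ∈ Finset.cons a T ha, x i) ω) ^ (q/s))
        = (fun ω => myG s ε (fun j => (∑ i ∈ T, x i) ω j + x a ω j) ^ (q/s)) := by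
      funext ω
      have harg : ((∑ i ∈ Finset.cons a T ha, x i) ω) = (fun j => (∑ i ∈ T, x i) ω j + x a ω j) := by
        rw [Finset.sum_cons]
        funext j
        simp only [Pi.add_apply]
        ring
      rw [harg]
    constructor
    · rw [hrepr]
      exact int_myG_add hs hq hε hu (hxm a) IHint (hIK a)
    · rw [hrepr, Finset.sum_cons]
      calc (∫ ω, myG s ε (fun j => (∑ i ∈ T, x i) ω j + x a ω j) ^ (q/s) ∂μ) ^ (2/q)
          ≤ (∫ ω, myG s ε ((∑ i ∈ T, x i) ω) ^ (q/s) ∂μ) ^ (2/q)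
            + (s-1) * (∫ ω, myK s (x a ω) ^ q ∂μ) ^ (2/q) := hstep
        _ ≤ (ε^2 + (s-1) * ∑ i ∈ T, (∫ ω, myK s (x i ω) ^ q ∂μ) ^ (2/q))
            + (s-1) * (∫ ω, myK s (x a ω) ^ q ∂μ) ^ (2/q) := by linarith [IHle]
        _ = ε^2 + (s-1) * ((∫ ω, myK s (x a ω) ^ q ∂μ) ^ (2/q)
            + ∑ i ∈ T, (∫ ω, myK s (x i ω) ^ q ∂μ) ^ (2/q)) := by ring

end Induction

lemma my_rpow_sq {a q : ℝ} (ha : 0 ≤ a) (hq : 0 < q) : (a ^ (1/q)) ^ 2 = a ^ (2/q) := by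
  rw [← Real.rpow_natCast (a ^ (1/q)) 2, ← Real.rpow_mul ha]
  congr 1
  push_cast
  ring

theorem stmt8 {Ω : Type*} [MeasurableSpace Ω] (μ : Measure Ω) [IsProbabilityMeasure μ]
    (d n : ℕ) (hd : 0 < d) (q : ℝ) (hq : 2 ≤ q)
    (x : Fin n → Ω → Fin d → ℝ) (hmeas : ∀ i, Measurable (x i))
    (hindep : iIndepFun x μ)
    (hint : ∀ i j, Integrable (fun ω => x i ω j) μ)
    (hmean : ∀ i j, ∫ ω, x i ω j ∂μ = 0)
    (hmom : ∀ i, Integrable (fun ω => (⨆ j, |x i ω j|) ^ q) μ) :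
    ((∫ ω, (⨆ j, |∑ i, x i ω j|) ^ q ∂μ) ^ (1 / q)) ^ 2
      ≤ Real.exp 1 ^ 2 * (max q (Real.log d) - 1) *
          ∑ i, ((∫ ω, (⨆ j, |x i ω j|) ^ q ∂μ) ^ (1 / q)) ^ 2 := by
  have hdne : Nonempty (Fin d) := ⟨⟨0, hd⟩⟩
  set s := max q (Real.log d) with hsdef
  have hs : 2 ≤ s := le_trans hq (le_max_left _ _)
  have hqs : q ≤ s := le_max_left _ _
  have hLs : Real.log d ≤ s := le_max_right _ _
  have hs0 : (0:ℝ) < s := by linarith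
  have hq0 : (0:ℝ) < q := by linarith
  have hd1 : (1:ℝ) ≤ (d:ℝ) := by exact_mod_cast hd
  have hd0 : (0:ℝ) < (d:ℝ) := by linarith
  -- d^(1/s) ≤ e
  have hds : (d:ℝ) ^ (1/s : ℝ) ≤ Real.exp 1 := by
    rw [Real.rpow_def_of_pos hd0]
    apply Real.exp_le_exp.2
    rw [mul_one_div, div_le_one hs0]
    exact hLs
  -- sup is nonneg
  have hsupnn : ∀ y : Fin d → ℝ, 0 ≤ ⨆ j, |y j| := by
    intro y
    exact le_ciSup_of_le (f := fun j : Fin d => |y j|)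
      (Set.Finite.bddAbove (Set.finite_range _)) ⟨0, hd⟩ (abs_nonneg _)
  -- myK ≤ e * sup
  have hKsup : ∀ y : Fin d → ℝ, myK s y ≤ Real.exp 1 * ⨆ j, |y j| := by
    intro y
    have hsup := hsupnn y
    have hterm : ∀ j : Fin d, ((y j)^2) ^ (s/2) ≤ (⨆ j, |y j|) ^ s := by
      intro j
      rw [my_sq_rpow, show 2 * (s/2) = s by ring]
      apply Real.rpow_le_rpow (abs_nonneg _) _ hs0.le
      exact le_ciSup (f := fun j : Fin d => |y j|)
        (Set.Finite.bddAbove (Set.finite_range _)) j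
    unfold myK
    have hsum : (∑ j, ((y j)^2) ^ (s/2)) ≤ (d:ℝ) * (⨆ j, |y j|) ^ s := by
      calc (∑ j, ((y j)^2) ^ (s/2)) ≤ ∑ _j : Fin d, (⨆ j, |y j|) ^ s :=
            Finset.sum_le_sum fun j _ => hterm j
        _ = (d:ℝ) * (⨆ j, |y j|) ^ s := by
            rw [Finset.sum_const, Finset.card_univ, Fintype.card_fin, nsmul_eq_mul]
    calc (∑ j, ((y j)^2) ^ (s/2)) ^ (1/s)
        ≤ ((d:ℝ) * (⨆ j, |y j|) ^ s) ^ (1/s) := by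
          apply Real.rpow_le_rpow _ hsum (by positivity)
          exact Finset.sum_nonneg fun j _ => Real.rpow_nonneg (sq_nonneg _) _
      _ = (d:ℝ) ^ (1/s : ℝ) * ((⨆ j, |y j|) ^ s) ^ (1/s) :=
          Real.mul_rpow hd0.le (Real.rpow_nonneg hsup _)
      _ = (d:ℝ) ^ (1/s : ℝ) * (⨆ j, |y j|) := by
          rw [← Real.rpow_mul hsup, mul_one_div, div_self (ne_of_gt hs0), Real.rpow_one]
      _ ≤ Real.exp 1 * ⨆ j, |y j| := mul_le_mul_of_nonneg_right hds hsup
  -- integrability of myK^q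
  have hIK : ∀ i, Integrable (fun ω => myK s (x i ω) ^ q) μ := by
    intro i
    have hKmeas : Measurable (fun ω => myK s (x i ω) ^ q) := by
      have := hmeas i
      unfold myK
      fun_prop
    apply Integrable.mono' ((hmom i).const_mul (Real.exp 1 ^ q))
      hKmeas.aestronglyMeasurable
    filter_upwards with ω
    rw [Real.norm_eq_abs, abs_of_nonneg (Real.rpow_nonneg (myK_nonneg _ _) _)]
    calc myK s (x i ω) ^ q ≤ (Real.exp 1 * ⨆ j, |x i ω j|) ^ q :=
          Real.rpow_le_rpow (myK_nonneg _ _) (hKsup (x i ω)) hq0.le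
      _ = Real.exp 1 ^ q * (⨆ j, |x i ω j|) ^ q :=
          Real.mul_rpow (Real.exp_pos 1).le (hsupnn (x i ω))
  -- per-i comparison of the q-norms
  have hIKle : ∀ i : Fin n, (∫ ω, myK s (x i ω) ^ q ∂μ) ^ (2/q)
      ≤ Real.exp 1 ^ 2 * (∫ ω, (⨆ j, |x i ω j|) ^ q ∂μ) ^ (2/q) := by
    intro i
    have h1 : (∫ ω, myK s (x i ω) ^ q ∂μ)
        ≤ Real.exp 1 ^ q * ∫ ω, (⨆ j, |x i ω j|) ^ q ∂μ := by
      rw [← integral_const_mul]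
      apply integral_mono (hIK i) ((hmom i).const_mul _)
      intro ω
      calc myK s (x i ω) ^ q ≤ (Real.exp 1 * ⨆ j, |x i ω j|) ^ q :=
            Real.rpow_le_rpow (myK_nonneg _ _) (hKsup (x i ω)) hq0.le
        _ = Real.exp 1 ^ q * (⨆ j, |x i ω j|) ^ q :=
            Real.mul_rpow (Real.exp_pos 1).le (hsupnn (x i ω))
    have hKint_nn : (0:ℝ) ≤ ∫ ω, myK s (x i ω) ^ q ∂μ :=
      integral_nonneg fun ω => Real.rpow_nonneg (myK_nonneg _ _) _
    have hsupint_nn : (0:ℝ) ≤ ∫ ω, (⨆ j, |x i ω j|) ^ q ∂μ :=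
      integral_nonneg fun ω => Real.rpow_nonneg (hsupnn _) _
    calc (∫ ω, myK s (x i ω) ^ q ∂μ) ^ (2/q)
        ≤ (Real.exp 1 ^ q * ∫ ω, (⨆ j, |x i ω j|) ^ q ∂μ) ^ (2/q) :=
          Real.rpow_le_rpow hKint_nn h1 (by positivity)
      _ = (Real.exp 1 ^ q) ^ (2/q) * (∫ ω, (⨆ j, |x i ω j|) ^ q ∂μ) ^ (2/q) :=
          Real.mul_rpow (Real.rpow_nonneg (Real.exp_pos 1).le _) hsupint_nn
      _ = Real.exp 1 ^ 2 * (∫ ω, (⨆ j, |x i ω j|) ^ q ∂μ) ^ (2/q) := by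
          rw [← Real.rpow_mul (Real.exp_pos 1).le,
            show q * (2/q) = 2 by field_simp, Real.rpow_two]
  -- the RHS of the goal, as R
  set R := Real.exp 1 ^ 2 * (s - 1) * ∑ i, ((∫ ω, (⨆ j, |x i ω j|) ^ q ∂μ) ^ (1/q)) ^ 2 with hR
  -- main bound for every ε > 0
  have hmain : ∀ ε : ℝ, 0 < ε →
      ((∫ ω, (⨆ j, |∑ i, x i ω j|) ^ q ∂μ) ^ (1/q)) ^ 2 ≤ R + ε^2 := by
    intro ε hε
    obtain ⟨hInt, hineq⟩ := my_induction (μ := μ) hs hq hqs hε x hmeas hindep hint hmean hIK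
      Finset.univ
    -- pointwise sup ≤ Ne
    have hsup_le : ∀ ω, (⨆ j, |∑ i, x i ω j|) ^ q
        ≤ myG s ε ((∑ i, x i) ω) ^ (q/s) := by
      intro ω
      have hGpos := myG_pos hs hε ((∑ i, x i) ω)
      have hsle : (⨆ j, |∑ i, x i ω j|) ≤ (myG s ε ((∑ i, x i) ω)) ^ (1/s) := by
        apply ciSup_le
        intro j
        have he : |∑ i, x i ω j| = ((((∑ i, x i) ω j)^2) ^ (s/2)) ^ (1/s) := by
          rw [my_sq_rpow, ← Real.rpow_mul (abs_nonneg _),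
            show 2 * (s/2) * (1/s) = 1 by field_simp, Real.rpow_one]
          congr 1
          rw [Finset.sum_apply, Finset.sum_apply]
        rw [he]
        apply Real.rpow_le_rpow (Real.rpow_nonneg (sq_nonneg _) _) _ (by positivity)
        unfold myG
        have h1 : ((((∑ i, x i) ω j)^2) ^ (s/2)) ≤ ∑ k, ((((∑ i, x i) ω k)^2) ^ (s/2)) :=
          Finset.single_le_sum (f := fun k => ((((∑ i, x i) ω k)^2) ^ (s/2)))
            (fun k _ => Real.rpow_nonneg (sq_nonneg _) _) (Finset.mem_univ j)
        have h2 : (0:ℝ) ≤ ε ^ s := Real.rpow_nonneg hε.le _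
        linarith
      calc (⨆ j, |∑ i, x i ω j|) ^ q ≤ ((myG s ε ((∑ i, x i) ω)) ^ (1/s)) ^ q :=
            Real.rpow_le_rpow (hsupnn _) hsle hq0.le
        _ = myG s ε ((∑ i, x i) ω) ^ (q/s) := by
            rw [← Real.rpow_mul hGpos.le]
            congr 1
            field_simp
    have h1 : ∫ ω, (⨆ j, |∑ i, x i ω j|) ^ q ∂μ
        ≤ ∫ ω, myG s ε ((∑ i, x i) ω) ^ (q/s) ∂μ := by
      apply integral_mono_of_nonneg
      · filter_upwards with ω
        exact Real.rpow_nonneg (hsupnn _) _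
      · exact hInt
      · filter_upwards with ω
        exact hsup_le ω
    have hLnn : (0:ℝ) ≤ ∫ ω, (⨆ j, |∑ i, x i ω j|) ^ q ∂μ :=
      integral_nonneg fun ω => Real.rpow_nonneg (hsupnn _) _
    have hgnn : (0:ℝ) ≤ ∫ ω, myG s ε ((∑ i, x i) ω) ^ (q/s) ∂μ :=
      le_trans hLnn h1
    rw [my_rpow_sq hLnn hq0]
    calc (∫ ω, (⨆ j, |∑ i, x i ω j|) ^ q ∂μ) ^ (2/q)
        ≤ (∫ ω, myG s ε ((∑ i, x i) ω) ^ (q/s) ∂μ) ^ (2/q) :=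
          Real.rpow_le_rpow hLnn h1 (by positivity)
      _ ≤ ε^2 + (s-1) * ∑ i, (∫ ω, myK s (x i ω) ^ q ∂μ) ^ (2/q) := hineq
      _ ≤ ε^2 + (s-1) * ∑ i, Real.exp 1 ^ 2 * (∫ ω, (⨆ j, |x i ω j|) ^ q ∂μ) ^ (2/q) := by
          have := Finset.sum_le_sum (fun i (_ : i ∈ Finset.univ) => hIKle i)
          have hs1 : (0:ℝ) ≤ s - 1 := by linarith
          nlinarith [mul_le_mul_of_nonneg_left this hs1]
      _ = R + ε^2 := by
          rw [hR]
          rw [Finset.mul_sum, Finset.mul_sum]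
          have : ∀ i : Fin n, Real.exp 1 ^ 2 * (s-1)
              * ((∫ ω, (⨆ j, |x i ω j|) ^ q ∂μ) ^ (1/q)) ^ 2
              = (s-1) * (Real.exp 1 ^ 2 * (∫ ω, (⨆ j, |x i ω j|) ^ q ∂μ) ^ (2/q)) := by
            intro i
            rw [my_rpow_sq (integral_nonneg fun ω => Real.rpow_nonneg (hsupnn _) _) hq0]
            ring
          rw [Finset.sum_congr rfl (fun i _ => this i)]
          ring
  -- let ε → 0
  apply le_of_forall_pos_le_add
  intro δ hδ
  have := hmain (Real.sqrt δ) (Real.sqrt_pos.2 hδ)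
  rwa [Real.sq_sqrt hδ.le] at this
end
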